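/- For any set S ⊆ {1,…,n} and any j ∈ {1,…,k}, Networks 1 and 2 imply that T_S := (T_i)_{i∈S} is a sufficient statistic of X_S^j := (X_i^j)_{i∈S} for U, and likewise T_S is a sufficient statistic of Y_S := (Y_i)_{i∈S} for U and of Z_S := (Z_i)_{i∈S} for U; that is, for every joint distribution satisfying both networks, U ⊥⊥ X_S^j | T_S and X_S^j ≥ι T_S (and similarly with Y_S and Z_S in place of X_S^j). -/

import Mathlib

namespace Paper

/-- The probability of an event under a probability mass function. -/
noncomputable def pr {Ω : Type} (μ : PMF Ω) (E : Set Ω) : ENNReal :=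
  μ.toOuterMeasure E

/-- Conditional independence `X ⊥⊥ Y | Z`:
`p(x,y,z) p(z) = p(x,z) p(y,z)` for all `x, y, z`. -/
def CondIndep {Ω α β γ : Type} (μ : PMF Ω) (X : Ω → α) (Y : Ω → β) (Z : Ω → γ) : Prop :=
  ∀ (x : α) (y : β) (z : γ),
    pr μ {ω | X ω = x ∧ Y ω = y ∧ Z ω = z} * pr μ {ω | Z ω = z}
      = pr μ {ω | X ω = x ∧ Z ω = z} * pr μ {ω | Y ω = y ∧ Z ω = z}

/-- Unconditional independence `X ⊥⊥ Y`. -/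
def Indep {Ω α β : Type} (μ : PMF Ω) (X : Ω → α) (Y : Ω → β) : Prop :=
  ∀ (x : α) (y : β),
    pr μ {ω | X ω = x ∧ Y ω = y} = pr μ {ω | X ω = x} * pr μ {ω | Y ω = y}

/-- `X ≥ι Y`: `X` functionally determines `Y` (with probability one). -/
def FunDep {Ω α β : Type} (μ : PMF Ω) (X : Ω → α) (Y : Ω → β) : Prop :=
  ∃ f : α → β, ∀ ω ∈ μ.support, Y ω = f (X ω)

/-- `X =ι Y`: informational equivalence. -/
def InfoEq {Ω α β : Type} (μ : PMF Ω) (X : Ω → α) (Y : Ω → β) : Prop :=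
  FunDep μ X Y ∧ FunDep μ Y X

/-- The random variable `X` has finite support. -/
def FinSupp {Ω α : Type} (μ : PMF Ω) (X : Ω → α) : Prop :=
  (X '' μ.support).Finite

/-- The random variable `X` has support of cardinality at most `ℓ`. -/
def CardLE {Ω α : Type} (μ : PMF Ω) (X : Ω → α) (ℓ : ℕ) : Prop :=
  ∃ s : Finset α, s.card ≤ ℓ ∧ ∀ ω ∈ μ.support, X ω ∈ s

/-- `X` is uniformly distributed with support of cardinality `ℓ`. -/
def UniformCard {Ω α : Type} (μ : PMF Ω) (X : Ω → α) (ℓ : ℕ) : Prop :=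
  ∃ S : Finset α, S.card = ℓ ∧ (∀ x ∈ S, pr μ {ω | X ω = x} = (ℓ : ENNReal)⁻¹) ∧
    ∀ x, x ∉ S → pr μ {ω | X ω = x} = 0

/-- The probability mass function of the random variable `X`. -/
noncomputable def distOf {Ω α : Type} (μ : PMF Ω) (X : Ω → α) : α → ENNReal :=
  fun x => pr μ {ω | X ω = x}

/-- `p ⪰ q` : `p` majorizes `q`, i.e. for every `k`, the sum of the `k` largest values
of `p` is at least the sum of the `k` largest values of `q`. -/
def Majorizes (p q : ℕ → ENNReal) : Prop :=
  ∀ s : Finset ℕ, ∃ t : Finset ℕ, t.card ≤ s.card ∧ ∑ x ∈ s, q x ≤ ∑ x ∈ t, p x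

/-- `T` is a sufficient statistic of `X` for `U`: `X ≥ι T` and `U ⊥⊥ X | T`. -/
def SuffStat {Ω α β γ : Type} (μ : PMF Ω) (X : Ω → α) (U : Ω → β) (T : Ω → γ) : Prop :=
  FunDep μ X T ∧ CondIndep μ U X T

/-- `T` is a minimal sufficient statistic of `X` for `U`. -/
def MinSuffStat {Ω α β γ : Type} (μ : PMF Ω) (X : Ω → α) (U : Ω → β) (T : Ω → γ) : Prop :=
  SuffStat μ X U T ∧
    ∀ (δ : Type) (T' : Ω → δ), SuffStat μ X U T' → FunDep μ T' T

/-- Mutual independence of the subfamily `(V i)_{i ∈ s}`: each `V i` (for `i ∈ s`) is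
independent of the joint variable of the others. -/
def MutIndepOn {Ω ι : Type} {β : ι → Type} (μ : PMF Ω) (V : ∀ i, Ω → β i)
    (s : Finset ι) : Prop :=
  ∀ i ∈ s, Indep μ (V i) (fun ω => fun j : {j // j ∈ s ∧ j ≠ i} => V j.1 ω)

/-- Mutual independence of the whole family `(V i)_i`. -/
def MutIndep {Ω ι : Type} {β : ι → Type} (μ : PMF Ω) (V : ∀ i, Ω → β i) : Prop :=
  ∀ i, Indep μ (V i) (fun ω => fun j : {j // j ≠ i} => V j.1 ω)

/-- Mutual independence of `(V i)_{i ∈ C}` for a list `C` of indices. -/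
def MutIndepL {Ω : Type} (μ : PMF Ω) (V : ℕ → Ω → ℕ) (C : List ℕ) : Prop :=
  ∀ i ∈ C, Indep μ (V i) (fun ω => fun j : {j // j ∈ C ∧ j ≠ i} => V j.1 ω)

/-- The joint random variable `(X a)_{a ∈ A}` for a list `A` of indices. -/
def jointOn {Ω : Type} (X : ℕ → Ω → ℕ) (A : List ℕ) : Ω → ({a : ℕ // a ∈ A} → ℕ) :=
  fun ω a => X a.1 ω

/-- The joint random variable `(T i)_{i ∈ S}` for a finset `S` of indices. -/
def jointFin {Ω ι : Type} {β : ι → Type} (T : ∀ i, Ω → β i) (S : Finset ι) :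
    Ω → ((i : {i // i ∈ S}) → β i.1) :=
  fun ω i => T i.1 ω

/-- The set of parents (in-neighbours) of `w` in the directed graph with edge relation `E`. -/
def parentSet {ν : Type} (E : ν → ν → Prop) (w : ν) : Set ν := {v | E v w}

/-- The set of nodes that are neither descendants nor parents of `w`. -/
def nonDescSet {ν : Type} (E : ν → ν → Prop) (w : ν) : Set ν :=
  {v | ¬ Relation.ReflTransGen E w v ∧ ¬ E v w}

/-- The collection of random variables `(X v)_v` satisfies the Bayesian network structure
with edge relation `E`: each variable is conditionally independent of its
non-descendant non-parent variables given its parent variables. -/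
def SatisfiesBN {Ω ν : Type} {β : ν → Type} (μ : PMF Ω) (X : ∀ v, Ω → β v)
    (E : ν → ν → Prop) : Prop :=
  ∀ w : ν, CondIndep μ (X w)
    (fun ω => fun v : nonDescSet E w => X v.1 ω)
    (fun ω => fun v : parentSet E w => X v.1 ω)

/-- `E` is (the edge list of) a directed acyclic graph on the nodes `{0, …, n-1}`. -/
def IsDAG (n : ℕ) (E : List (ℕ × ℕ)) : Prop :=
  (∀ e ∈ E, e.1 < n ∧ e.2 < n) ∧
    ∀ i : ℕ, ¬ Relation.TransGen (fun a c => (a, c) ∈ E) i i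

/-- The edge relation on `Fin n` determined by an edge list. -/
def edgeRelOn (n : ℕ) (E : List (ℕ × ℕ)) : Fin n → Fin n → Prop :=
  fun i j => ((i : ℕ), (j : ℕ)) ∈ E

/-- `(X_0, …, X_{n-1})` satisfies the Bayesian network given by the edge list `E`. -/
def SatisfiesBNn {Ω : Type} (μ : PMF Ω) (n : ℕ) (X : ℕ → Ω → ℕ)
    (E : List (ℕ × ℕ)) : Prop :=
  SatisfiesBN μ (fun i : Fin n => X (i : ℕ)) (edgeRelOn n E)

/-- `(A, C, B) ∈ I(G_1, …, G_m)`: every collection of finitely supported discrete random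
variables satisfying all the network structures in `Gs` satisfies `X_A ⊥⊥ X_B | X_C`. -/
def ImpliedCI (n : ℕ) (Gs : List (List (ℕ × ℕ))) (A C B : List ℕ) : Prop :=
  ∀ (Ω : Type) (μ : PMF Ω) (X : ℕ → Ω → ℕ),
    (∀ i, i < n → FinSupp μ (X i)) →
    (∀ G ∈ Gs, SatisfiesBNn μ n X G) →
    CondIndep μ (jointOn X A) (jointOn X B) (jointOn X C)

/-- Two lists are disjoint as sets. -/
def DisjointL (A B : List ℕ) : Prop := ∀ a ∈ A, a ∉ B

end Paper
namespace Paper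

/-- The nodes of the two networks: `u i = U_i`, `y i = Y_i`, `z i = Z_i`,
`x i j = X_i^j`. -/
inductive BNode (n k : ℕ) : Type
  | u : Fin n → BNode n k
  | y : Fin n → BNode n k
  | z : Fin n → BNode n k
  | x : Fin n → Fin k → BNode n k

/-- Edge relation of Network 1: `U_i → U_{i'}` for `i ∈ C1, i' ∉ C1` and for
`i, i' ∉ C1` with `i < i'`; and `U_i → Y_i → X_i^1 → ⋯ → X_i^k → Z_i`. -/
def edge1 (n k : ℕ) (C1 : Finset (Fin n)) : BNode n k → BNode n k → Prop :=
  fun v w => match v, w with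
  | .u i, .u i' => (i ∈ C1 ∧ i' ∉ C1) ∨ (i ∉ C1 ∧ i' ∉ C1 ∧ i < i')
  | .u i, .y i' => i = i'
  | .y i, .x i' j => i = i' ∧ (j : ℕ) = 0
  | .x i j, .x i' j' => i = i' ∧ (j' : ℕ) = (j : ℕ) + 1
  | .x i j, .z i' => i = i' ∧ (j : ℕ) = k - 1
  | _, _ => False

/-- Edge relation of Network 2: `U_i → U_{i'}` for `i ∈ C2, i' ∉ C2` and for
`i, i' ∉ C2` with `i < i'`; `U_i → Z_i → Y_i`; `U_i → X_i^j` for `i ≠ b j`; and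
`X_i^j → X_{b_j}^j` for `i ∈ A j`. -/
def edge2 (n k : ℕ) (C2 : Finset (Fin n)) (A : Fin k → Finset (Fin n))
    (b : Fin k → Fin n) : BNode n k → BNode n k → Prop :=
  fun v w => match v, w with
  | .u i, .u i' => (i ∈ C2 ∧ i' ∉ C2) ∨ (i ∉ C2 ∧ i' ∉ C2 ∧ i < i')
  | .u i, .z i' => i = i'
  | .z i, .y i' => i = i'
  | .u i, .x i' j => i = i' ∧ i' ≠ b j
  | .x i j, .x i' j' => j = j' ∧ i' = b j ∧ i ∈ A j
  | _, _ => False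

/-- The joint random variable `U = (U_1, …, U_n)`. -/
def Ujoint {Ω : Type} {n k : ℕ} (X : BNode n k → Ω → ℕ) : Ω → (Fin n → ℕ) :=
  fun ω i => X (.u i) ω

/-- The joint random variable `((X_i^j)_{j=1}^k, Y_i, Z_i)`. -/
def tupleVar {Ω : Type} {n k : ℕ} (X : BNode n k → Ω → ℕ) (i : Fin n) :
    Ω → ((Fin k → ℕ) × ℕ × ℕ) :=
  fun ω => (fun j => X (.x i j) ω, X (.y i) ω, X (.z i) ω)

end Paper
namespace Paper

variable {Ω α β γ δ κ : Type} {μ : PMF Ω}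

lemma pr_eq_tsum (μ : PMF Ω) (E : Set Ω) : pr μ E = ∑' ω, E.indicator μ ω :=
  PMF.toOuterMeasure_apply μ E

lemma pr_congr' {E F : Set Ω} (h : ∀ ω, ω ∈ E ↔ ω ∈ F) : pr μ E = pr μ F :=
  congrArg (pr μ) (Set.ext h)

lemma pr_congr {E F : Set Ω} (h : ∀ ω, μ ω ≠ 0 → (ω ∈ E ↔ ω ∈ F)) : pr μ E = pr μ F := by
  rw [pr_eq_tsum, pr_eq_tsum]
  refine tsum_congr fun ω => ?_
  classical
  by_cases hω : μ ω = 0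
  · rw [Set.indicator_apply, Set.indicator_apply]; split <;> split <;> simp [hω]
  · rw [Set.indicator_apply, Set.indicator_apply]
    have := h ω hω
    split <;> split <;> simp_all

lemma pr_mono {E F : Set Ω} (h : E ⊆ F) : pr μ E ≤ pr μ F :=
  μ.toOuterMeasure.mono h

lemma pr_empty : pr μ (∅ : Set Ω) = 0 := by
  simp [pr]

lemma pr_univ : pr μ (Set.univ : Set Ω) = 1 := by
  rw [pr_eq_tsum]; simpa using μ.tsum_coe

lemma pr_le_one (E : Set Ω) : pr μ E ≤ 1 := by
  simpa [pr_univ] using pr_mono (μ := μ) (Set.subset_univ E)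

lemma pr_ne_top (E : Set Ω) : pr μ E ≠ ⊤ :=
  ne_top_of_le_ne_top ENNReal.one_ne_top (pr_le_one E)

lemma mem_le_pr {E : Set Ω} {ω : Ω} (h : ω ∈ E) : μ ω ≤ pr μ E := by
  rw [pr_eq_tsum]
  have h2 : Set.indicator E (fun ω => μ ω) ω = μ ω := Set.indicator_of_mem h _
  calc μ ω = Set.indicator E (fun ω => μ ω) ω := h2.symm
  _ ≤ _ := ENNReal.le_tsum ω

lemma pr_ne_zero_iff {E : Set Ω} : pr μ E ≠ 0 ↔ ∃ ω ∈ E, μ ω ≠ 0 := by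
  classical
  rw [pr_eq_tsum, Ne, ENNReal.tsum_eq_zero]
  constructor
  · intro h
    push_neg at h
    obtain ⟨ω, hω⟩ := h
    rw [Set.indicator_apply] at hω
    by_cases hm : ω ∈ E
    · exact ⟨ω, hm, by simpa [hm] using hω⟩
    · simp [hm] at hω
  · rintro ⟨ω, hm, hω⟩ h
    exact hω (by simpa [Set.indicator_apply, hm] using h ω)

lemma pr_fiber (μ : PMF Ω) (V : Ω → γ) (E : Set Ω) :
    pr μ E = ∑' g : γ, pr μ (E ∩ {ω | V ω = g}) := by
  classical
  have h1 : ∑' g : γ, pr μ (E ∩ {ω | V ω = g})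
      = ∑' (g : γ) (ω : Ω), (E ∩ {ω' | V ω' = g}).indicator μ ω :=
    tsum_congr fun g => pr_eq_tsum μ _
  rw [pr_eq_tsum, h1, ENNReal.tsum_comm]
  refine tsum_congr fun ω => ?_
  rw [tsum_eq_single (V ω) ?_]
  · rw [Set.indicator_apply, Set.indicator_apply]
    simp only [Set.mem_inter_iff, Set.mem_setOf_eq]
    split <;> split <;> simp_all
  · intro g hg
    apply Set.indicator_of_notMem
    simp only [Set.mem_inter_iff, Set.mem_setOf_eq]
    rintro ⟨-, rfl⟩
    exact hg rfl


section CITools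

lemma condIndep_symm {X : Ω → α} {Y : Ω → β} {Z : Ω → γ} (h : CondIndep μ X Y Z) :
    CondIndep μ Y X Z := by
  intro y x z
  have e1 : pr μ {ω | Y ω = y ∧ X ω = x ∧ Z ω = z}
      = pr μ {ω | X ω = x ∧ Y ω = y ∧ Z ω = z} := pr_congr' fun ω => by
    simp only [Set.mem_setOf_eq]; tauto
  rw [e1, h x y z, mul_comm]

lemma condIndep_comp_middle {X : Ω → α} {Y : Ω → β} {Z : Ω → γ} {Y' : Ω → δ}
    (h : CondIndep μ X Y Z) (φ : β → δ) (hY' : ∀ ω, Y' ω = φ (Y ω)) :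
    CondIndep μ X Y' Z := by
  classical
  intro x b z
  have eL : pr μ {ω | X ω = x ∧ Y' ω = b ∧ Z ω = z}
      = ∑' y : β, (if φ y = b then pr μ {ω | X ω = x ∧ Y ω = y ∧ Z ω = z} else 0) := by
    rw [pr_fiber μ Y]
    refine tsum_congr fun y => ?_
    split
    · refine pr_congr' fun ω => ?_
      simp only [Set.mem_inter_iff, Set.mem_setOf_eq, hY']
      constructor
      · rintro ⟨⟨h1, h2, h3⟩, h4⟩; exact ⟨h1, h4, h3⟩
      · rintro ⟨h1, h4, h3⟩; refine ⟨⟨h1, ?_, h3⟩, h4⟩; rw [h4]; assumption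
    · rw [show ({ω | X ω = x ∧ Y' ω = b ∧ Z ω = z} ∩ {ω | Y ω = y}) = (∅ : Set Ω) from ?_,
        pr_empty]
      ext ω
      simp only [Set.mem_inter_iff, Set.mem_setOf_eq, Set.mem_empty_iff_false, iff_false,
        not_and, hY']
      rintro ⟨h1, h2, h3⟩ h4
      rw [h4] at h2; exact absurd h2 (by assumption)
  have eR : pr μ {ω | Y' ω = b ∧ Z ω = z}
      = ∑' y : β, (if φ y = b then pr μ {ω | Y ω = y ∧ Z ω = z} else 0) := by
    rw [pr_fiber μ Y]
    refine tsum_congr fun y => ?_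
    split
    · refine pr_congr' fun ω => ?_
      simp only [Set.mem_inter_iff, Set.mem_setOf_eq, hY']
      constructor
      · rintro ⟨⟨h2, h3⟩, h4⟩; exact ⟨h4, h3⟩
      · rintro ⟨h4, h3⟩; refine ⟨⟨?_, h3⟩, h4⟩; rw [h4]; assumption
    · rw [show ({ω | Y' ω = b ∧ Z ω = z} ∩ {ω | Y ω = y}) = (∅ : Set Ω) from ?_, pr_empty]
      ext ω
      simp only [Set.mem_inter_iff, Set.mem_setOf_eq, Set.mem_empty_iff_false, iff_false,
        not_and, hY']
      rintro ⟨h2, h3⟩ h4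
      rw [h4] at h2; exact absurd h2 (by assumption)
  rw [eL, eR, ← ENNReal.tsum_mul_right, ← ENNReal.tsum_mul_left]
  refine tsum_congr fun y => ?_
  split
  · exact h x y z
  · simp

lemma condIndep_comp_first {X : Ω → α} {Y : Ω → β} {Z : Ω → γ} {X' : Ω → δ}
    (h : CondIndep μ X Y Z) (φ : α → δ) (hX' : ∀ ω, X' ω = φ (X ω)) :
    CondIndep μ X' Y Z :=
  condIndep_symm (condIndep_comp_middle (condIndep_symm h) φ hX')

lemma condIndep_cond_equiv {X : Ω → α} {Y : Ω → β} {Z : Ω → γ} {Z' : Ω → δ}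
    (h : CondIndep μ X Y Z) (ρ : δ → γ) (σ : γ → δ)
    (hρ : ∀ ω, Z ω = ρ (Z' ω)) (hσ : ∀ ω, Z' ω = σ (Z ω)) :
    CondIndep μ X Y Z' := by
  intro x y z'
  by_cases hc : σ (ρ z') = z'
  · have key : ∀ ω, Z' ω = z' ↔ Z ω = ρ z' := fun ω => by
      constructor
      · intro h1; rw [hρ, h1]
      · intro h1; rw [hσ, h1, hc]
    have e1 : pr μ {ω | X ω = x ∧ Y ω = y ∧ Z' ω = z'}
        = pr μ {ω | X ω = x ∧ Y ω = y ∧ Z ω = ρ z'} := pr_congr' fun ω => by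
      simp only [Set.mem_setOf_eq, key]
    have e2 : pr μ {ω | Z' ω = z'} = pr μ {ω | Z ω = ρ z'} := pr_congr' fun ω => by
      simp only [Set.mem_setOf_eq, key]
    have e3 : pr μ {ω | X ω = x ∧ Z' ω = z'} = pr μ {ω | X ω = x ∧ Z ω = ρ z'} :=
      pr_congr' fun ω => by simp only [Set.mem_setOf_eq, key]
    have e4 : pr μ {ω | Y ω = y ∧ Z' ω = z'} = pr μ {ω | Y ω = y ∧ Z ω = ρ z'} :=
      pr_congr' fun ω => by simp only [Set.mem_setOf_eq, key]
    rw [e1, e2, e3, e4]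
    exact h x y (ρ z')
  · have key : ∀ ω, Z' ω ≠ z' := by
      intro ω h1
      apply hc
      rw [← h1, ← hρ ω, ← hσ ω, h1]
    have z1 : pr μ {ω | Z' ω = z'} = 0 := by
      rw [show {ω | Z' ω = z'} = (∅ : Set Ω) from ?_, pr_empty]
      ext ω; simp only [Set.mem_setOf_eq, Set.mem_empty_iff_false, iff_false]
      exact key ω
    have z0 : ∀ (E : Set Ω), E ⊆ {ω | Z' ω = z'} → pr μ E = 0 := fun E hE =>
      le_antisymm (le_trans (pr_mono hE) z1.le) (zero_le)
    rw [z1, z0 {ω | X ω = x ∧ Y ω = y ∧ Z' ω = z'} (fun ω h => h.2.2),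
      z0 {ω | X ω = x ∧ Z' ω = z'} (fun ω h => h.2),
      z0 {ω | Y ω = y ∧ Z' ω = z'} (fun ω h => h.2)]

lemma condIndep_mid_pair_cond {X : Ω → α} {Y : Ω → β} {Z : Ω → γ}
    (h : CondIndep μ X Y Z) : CondIndep μ X (fun ω => (Y ω, Z ω)) Z := by
  intro x p z
  obtain ⟨y, z0⟩ := p
  by_cases hz : z0 = z
  · subst hz
    have e1 : pr μ {ω | X ω = x ∧ (fun ω => (Y ω, Z ω)) ω = (y, z0) ∧ Z ω = z0}
        = pr μ {ω | X ω = x ∧ Y ω = y ∧ Z ω = z0} := pr_congr' fun ω => by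
      simp only [Set.mem_setOf_eq, Prod.mk.injEq]; tauto
    have e2 : pr μ {ω | (fun ω => (Y ω, Z ω)) ω = (y, z0) ∧ Z ω = z0}
        = pr μ {ω | Y ω = y ∧ Z ω = z0} := pr_congr' fun ω => by
      simp only [Set.mem_setOf_eq, Prod.mk.injEq]; tauto
    rw [e1, e2]
    exact h x y z0
  · have e1 : pr μ {ω | X ω = x ∧ (fun ω => (Y ω, Z ω)) ω = (y, z0) ∧ Z ω = z}
        = 0 := by
      rw [show {ω | X ω = x ∧ (fun ω => (Y ω, Z ω)) ω = (y, z0) ∧ Z ω = z} = (∅ : Set Ω)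
          from ?_, pr_empty]
      ext ω
      simp only [Set.mem_setOf_eq, Prod.mk.injEq, Set.mem_empty_iff_false, iff_false]
      rintro ⟨-, ⟨-, h2⟩, h3⟩; exact hz (h2.symm.trans h3)
    have e2 : pr μ {ω | (fun ω => (Y ω, Z ω)) ω = (y, z0) ∧ Z ω = z} = 0 := by
      rw [show {ω | (fun ω => (Y ω, Z ω)) ω = (y, z0) ∧ Z ω = z} = (∅ : Set Ω) from ?_,
        pr_empty]
      ext ω
      simp only [Set.mem_setOf_eq, Prod.mk.injEq, Set.mem_empty_iff_false, iff_false]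
      rintro ⟨⟨-, h2⟩, h3⟩; exact hz (h2.symm.trans h3)
    rw [e1, e2]
    simp

lemma condIndep_cond_aug {X : Ω → α} {Y : Ω → β} {Z : Ω → γ} {Z' : Ω → δ}
    (h : CondIndep μ X Y Z) (φ : γ → δ) (hφ : ∀ ω ∈ μ.support, Z' ω = φ (Z ω)) :
    CondIndep μ X Y (fun ω => (Z ω, Z' ω)) := by
  have hφ' : ∀ ω, μ ω ≠ 0 → Z' ω = φ (Z ω) := fun ω h0 => hφ ω (by simpa [PMF.mem_support_iff])
  intro x y p
  obtain ⟨z, z'⟩ := p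
  by_cases hc : φ z = z'
  · have key : ∀ ω, μ ω ≠ 0 → (((Z ω, Z' ω) = (z, z')) ↔ Z ω = z) := by
      intro ω h0
      simp only [Prod.mk.injEq]
      constructor
      · tauto
      · intro h1; exact ⟨h1, by rw [hφ' ω h0, h1, hc]⟩
    have e1 : pr μ {ω | X ω = x ∧ Y ω = y ∧ (fun ω => (Z ω, Z' ω)) ω = (z, z')}
        = pr μ {ω | X ω = x ∧ Y ω = y ∧ Z ω = z} := pr_congr fun ω h0 => by
      simp only [Set.mem_setOf_eq, key ω h0]
    have e2 : pr μ {ω | (fun ω => (Z ω, Z' ω)) ω = (z, z')} = pr μ {ω | Z ω = z} :=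
      pr_congr fun ω h0 => by simp only [Set.mem_setOf_eq, key ω h0]
    have e3 : pr μ {ω | X ω = x ∧ (fun ω => (Z ω, Z' ω)) ω = (z, z')}
        = pr μ {ω | X ω = x ∧ Z ω = z} := pr_congr fun ω h0 => by
      simp only [Set.mem_setOf_eq, key ω h0]
    have e4 : pr μ {ω | Y ω = y ∧ (fun ω => (Z ω, Z' ω)) ω = (z, z')}
        = pr μ {ω | Y ω = y ∧ Z ω = z} := pr_congr fun ω h0 => by
      simp only [Set.mem_setOf_eq, key ω h0]
    rw [e1, e2, e3, e4]
    exact h x y z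
  · have key : ∀ ω, μ ω ≠ 0 → ¬ ((Z ω, Z' ω) = (z, z')) := by
      intro ω h0 h1
      simp only [Prod.mk.injEq] at h1
      apply hc
      rw [← h1.1, ← hφ' ω h0, h1.2]
    have z1 : pr μ {ω | (fun ω => (Z ω, Z' ω)) ω = (z, z')} = 0 := by
      rw [show pr μ {ω | (fun ω => (Z ω, Z' ω)) ω = (z, z')} = pr μ (∅ : Set Ω) from
        pr_congr fun ω h0 => by
          simp only [Set.mem_setOf_eq, Set.mem_empty_iff_false, iff_false]
          exact key ω h0, pr_empty]
    have z0 : ∀ (E : Set Ω), E ⊆ {ω | (fun ω => (Z ω, Z' ω)) ω = (z, z')} → pr μ E = 0 :=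
      fun E hE => le_antisymm (le_trans (pr_mono hE) z1.le) (zero_le)
    rw [z1, z0 {ω | X ω = x ∧ Y ω = y ∧ (fun ω => (Z ω, Z' ω)) ω = (z, z')} (fun ω h => h.2.2),
      z0 {ω | X ω = x ∧ (fun ω => (Z ω, Z' ω)) ω = (z, z')} (fun ω h => h.2),
      z0 {ω | Y ω = y ∧ (fun ω => (Z ω, Z' ω)) ω = (z, z')} (fun ω h => h.2)]

lemma condIndep_weak_union {X : Ω → α} {Y : Ω → β} {W : Ω → δ} {Z : Ω → γ}
    (h : CondIndep μ X (fun ω => (Y ω, W ω)) Z) :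
    CondIndep μ X Y (fun ω => (Z ω, W ω)) := by
  intro x y p
  obtain ⟨z, w⟩ := p
  have hA : pr μ {ω | X ω = x ∧ Y ω = y ∧ (fun ω => (Z ω, W ω)) ω = (z, w)}
      = pr μ {ω | X ω = x ∧ (fun ω => (Y ω, W ω)) ω = (y, w) ∧ Z ω = z} :=
    pr_congr' fun ω => by simp only [Set.mem_setOf_eq, Prod.mk.injEq]; tauto
  have hB : pr μ {ω | (fun ω => (Z ω, W ω)) ω = (z, w)}
      = pr μ {ω | W ω = w ∧ Z ω = z} :=
    pr_congr' fun ω => by simp only [Set.mem_setOf_eq, Prod.mk.injEq]; tauto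
  have hC : pr μ {ω | X ω = x ∧ (fun ω => (Z ω, W ω)) ω = (z, w)}
      = pr μ {ω | X ω = x ∧ W ω = w ∧ Z ω = z} :=
    pr_congr' fun ω => by simp only [Set.mem_setOf_eq, Prod.mk.injEq]; tauto
  have hD : pr μ {ω | Y ω = y ∧ (fun ω => (Z ω, W ω)) ω = (z, w)}
      = pr μ {ω | (fun ω => (Y ω, W ω)) ω = (y, w) ∧ Z ω = z} :=
    pr_congr' fun ω => by simp only [Set.mem_setOf_eq, Prod.mk.injEq]; tauto
  rw [hA, hB, hC, hD]
  set A := pr μ {ω | X ω = x ∧ (fun ω => (Y ω, W ω)) ω = (y, w) ∧ Z ω = z} with hAdef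
  set B := pr μ {ω | W ω = w ∧ Z ω = z} with hBdef
  set C := pr μ {ω | X ω = x ∧ W ω = w ∧ Z ω = z} with hCdef
  set D := pr μ {ω | (fun ω => (Y ω, W ω)) ω = (y, w) ∧ Z ω = z} with hDdef
  have key1 : A * pr μ {ω | Z ω = z} = pr μ {ω | X ω = x ∧ Z ω = z} * D := h x (y, w) z
  have h' : CondIndep μ X W Z :=
    condIndep_comp_middle h (fun p => p.2) (fun ω => rfl)
  have key2 : C * pr μ {ω | Z ω = z} = pr μ {ω | X ω = x ∧ Z ω = z} * B := h' x w z
  by_cases hz : pr μ {ω | Z ω = z} = 0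
  · have hA0 : A = 0 := le_antisymm (le_trans (pr_mono fun ω h => h.2.2) hz.le) (zero_le)
    have hC0 : C = 0 := le_antisymm (le_trans (pr_mono fun ω h => h.2.2) hz.le) (zero_le)
    rw [hA0, hC0, zero_mul, zero_mul]
  · refine (ENNReal.mul_left_inj hz (pr_ne_top _)).mp ?_
    calc A * B * pr μ {ω | Z ω = z} = (A * pr μ {ω | Z ω = z}) * B := by ring
    _ = (pr μ {ω | X ω = x ∧ Z ω = z} * D) * B := by rw [key1]
    _ = (C * pr μ {ω | Z ω = z}) * D := by rw [key2]; ring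
    _ = C * D * pr μ {ω | Z ω = z} := by ring

lemma condIndep_contraction {X : Ω → α} {Y : Ω → β} {W : Ω → δ} {Z : Ω → γ}
    (h1 : CondIndep μ X Y (fun ω => (Z ω, W ω)))
    (h2 : CondIndep μ X W Z) :
    CondIndep μ X (fun ω => (Y ω, W ω)) Z := by
  intro x p z
  obtain ⟨y, w⟩ := p
  have hA : pr μ {ω | X ω = x ∧ (fun ω => (Y ω, W ω)) ω = (y, w) ∧ Z ω = z}
      = pr μ {ω | X ω = x ∧ Y ω = y ∧ (fun ω => (Z ω, W ω)) ω = (z, w)} :=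
    pr_congr' fun ω => by simp only [Set.mem_setOf_eq, Prod.mk.injEq]; tauto
  have hD : pr μ {ω | (fun ω => (Y ω, W ω)) ω = (y, w) ∧ Z ω = z}
      = pr μ {ω | Y ω = y ∧ (fun ω => (Z ω, W ω)) ω = (z, w)} :=
    pr_congr' fun ω => by simp only [Set.mem_setOf_eq, Prod.mk.injEq]; tauto
  rw [hA, hD]
  have hB : pr μ {ω | (fun ω => (Z ω, W ω)) ω = (z, w)}
      = pr μ {ω | W ω = w ∧ Z ω = z} :=
    pr_congr' fun ω => by simp only [Set.mem_setOf_eq, Prod.mk.injEq]; tauto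
  have hC : pr μ {ω | X ω = x ∧ (fun ω => (Z ω, W ω)) ω = (z, w)}
      = pr μ {ω | X ω = x ∧ W ω = w ∧ Z ω = z} :=
    pr_congr' fun ω => by simp only [Set.mem_setOf_eq, Prod.mk.injEq]; tauto
  have key1 := h1 x y (z, w)
  rw [hB, hC] at key1
  have key2 := h2 x w z
  by_cases hb : pr μ {ω | W ω = w ∧ Z ω = z} = 0
  · have hA0 : pr μ {ω | X ω = x ∧ Y ω = y ∧ (fun ω => (Z ω, W ω)) ω = (z, w)} = 0 := by
      refine le_antisymm (le_trans (pr_mono fun ω h => ?_) hb.le) (zero_le)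
      obtain ⟨-, -, h3⟩ := h
      simp only [Prod.mk.injEq] at h3
      exact ⟨h3.2, h3.1⟩
    have hD0 : pr μ {ω | Y ω = y ∧ (fun ω => (Z ω, W ω)) ω = (z, w)} = 0 := by
      refine le_antisymm (le_trans (pr_mono fun ω h => ?_) hb.le) (zero_le)
      obtain ⟨-, h3⟩ := h
      simp only [Prod.mk.injEq] at h3
      exact ⟨h3.2, h3.1⟩
    rw [hA0, hD0, zero_mul, mul_zero]
  · refine (ENNReal.mul_left_inj hb (pr_ne_top _)).mp ?_
    calc pr μ {ω | X ω = x ∧ Y ω = y ∧ (fun ω => (Z ω, W ω)) ω = (z, w)} * pr μ {ω | Z ω = z}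
        * pr μ {ω | W ω = w ∧ Z ω = z}
        = (pr μ {ω | X ω = x ∧ Y ω = y ∧ (fun ω => (Z ω, W ω)) ω = (z, w)}
            * pr μ {ω | W ω = w ∧ Z ω = z}) * pr μ {ω | Z ω = z} := by ring
    _ = (pr μ {ω | X ω = x ∧ W ω = w ∧ Z ω = z}
          * pr μ {ω | Y ω = y ∧ (fun ω => (Z ω, W ω)) ω = (z, w)}) * pr μ {ω | Z ω = z} := by
        rw [key1]
    _ = (pr μ {ω | X ω = x ∧ W ω = w ∧ Z ω = z} * pr μ {ω | Z ω = z})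
          * pr μ {ω | Y ω = y ∧ (fun ω => (Z ω, W ω)) ω = (z, w)} := by ring
    _ = (pr μ {ω | X ω = x ∧ Z ω = z} * pr μ {ω | W ω = w ∧ Z ω = z})
          * pr μ {ω | Y ω = y ∧ (fun ω => (Z ω, W ω)) ω = (z, w)} := by rw [key2]
    _ = _ := by ring

lemma funDep_trans {X : Ω → α} {Y : Ω → β} {Z : Ω → γ}
    (h1 : FunDep μ X Y) (h2 : FunDep μ Y Z) : FunDep μ X Z := by
  obtain ⟨f, hf⟩ := h1
  obtain ⟨g, hg⟩ := h2
  exact ⟨g ∘ f, fun ω hω => by simp [hg ω hω, hf ω hω]⟩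

end CITools

section DM

variable {U' : Ω → κ} {Y Z : Ω → ℕ}

def dmRel (μ : PMF Ω) (Y Z : Ω → ℕ) : (ℕ ⊕ ℕ) → (ℕ ⊕ ℕ) → Prop
  | .inl y, .inr z => pr μ {ω | Y ω = y ∧ Z ω = z} ≠ 0
  | .inr z, .inl y => pr μ {ω | Y ω = y ∧ Z ω = z} ≠ 0
  | _, _ => False

noncomputable def dmP (μ : PMF Ω) (Y Z : Ω → ℕ) : (ℕ ⊕ ℕ) → ENNReal
  | .inl y => pr μ {ω | Y ω = y}
  | .inr z => pr μ {ω | Z ω = z}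

noncomputable def dmPu (μ : PMF Ω) (U' : Ω → κ) (Y Z : Ω → ℕ) (u : κ) : (ℕ ⊕ ℕ) → ENNReal
  | .inl y => pr μ {ω | U' ω = u ∧ Y ω = y}
  | .inr z => pr μ {ω | U' ω = u ∧ Z ω = z}

lemma dm_base (h1 : CondIndep μ U' Z Y) (h2 : CondIndep μ U' Y Z) {y z : ℕ}
    (hq : pr μ {ω | Y ω = y ∧ Z ω = z} ≠ 0) (u : κ) :
    pr μ {ω | U' ω = u ∧ Y ω = y} * pr μ {ω | Z ω = z}
      = pr μ {ω | U' ω = u ∧ Z ω = z} * pr μ {ω | Y ω = y} := by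
  set q := pr μ {ω | Y ω = y ∧ Z ω = z} with hqdef
  have e1 : pr μ {ω | U' ω = u ∧ Z ω = z ∧ Y ω = y}
      = pr μ {ω | U' ω = u ∧ Y ω = y ∧ Z ω = z} :=
    pr_congr' fun ω => by simp only [Set.mem_setOf_eq]; tauto
  have e2 : pr μ {ω | Z ω = z ∧ Y ω = y} = q :=
    pr_congr' fun ω => by simp only [Set.mem_setOf_eq]; tauto
  have k1 := h1 u z y
  rw [e1, e2] at k1
  have k2 := h2 u y z
  have e3 : pr μ {ω | Y ω = y ∧ Z ω = z} = q := rfl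
  rw [e3] at k2
  -- k1 : J * P(y) = Pu(u,y) * q ; k2 : J * P(z) = Pu(u,z) * q
  refine (ENNReal.mul_left_inj hq (pr_ne_top _)).mp ?_
  calc pr μ {ω | U' ω = u ∧ Y ω = y} * pr μ {ω | Z ω = z} * q
      = (pr μ {ω | U' ω = u ∧ Y ω = y} * q) * pr μ {ω | Z ω = z} := by ring
  _ = (pr μ {ω | U' ω = u ∧ Y ω = y ∧ Z ω = z} * pr μ {ω | Y ω = y})
        * pr μ {ω | Z ω = z} := by rw [k1]
  _ = (pr μ {ω | U' ω = u ∧ Y ω = y ∧ Z ω = z} * pr μ {ω | Z ω = z})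
        * pr μ {ω | Y ω = y} := by ring
  _ = (pr μ {ω | U' ω = u ∧ Z ω = z} * q) * pr μ {ω | Y ω = y} := by rw [k2]
  _ = _ := by ring

lemma dm_cross (h1 : CondIndep μ U' Z Y) (h2 : CondIndep μ U' Y Z) {v v' : ℕ ⊕ ℕ}
    (h : Relation.EqvGen (dmRel μ Y Z) v v') (u : κ) :
    dmPu μ U' Y Z u v * dmP μ Y Z v' = dmPu μ U' Y Z u v' * dmP μ Y Z v := by
  suffices hs : v = v' ∨ (dmP μ Y Z v ≠ 0 ∧ dmP μ Y Z v' ≠ 0 ∧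
      ∀ u, dmPu μ U' Y Z u v * dmP μ Y Z v' = dmPu μ U' Y Z u v' * dmP μ Y Z v) by
    rcases hs with rfl | ⟨-, -, hid⟩
    · rfl
    · exact hid u
  clear u
  induction h with
  | rel v v' hr =>
    right
    match v, v', hr with
    | .inl y, .inr z, hq =>
      refine ⟨?_, ?_, fun u => dm_base h1 h2 hq u⟩
      · exact fun h0 => hq (le_antisymm (le_trans (pr_mono fun ω h => h.1) h0.le) (zero_le))
      · exact fun h0 => hq (le_antisymm (le_trans (pr_mono fun ω h => h.2) h0.le) (zero_le))
    | .inr z, .inl y, hq =>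
      refine ⟨?_, ?_, fun u => (dm_base h1 h2 hq u).symm⟩
      · exact fun h0 => hq (le_antisymm (le_trans (pr_mono fun ω h => h.2) h0.le) (zero_le))
      · exact fun h0 => hq (le_antisymm (le_trans (pr_mono fun ω h => h.1) h0.le) (zero_le))
  | refl v => left; rfl
  | symm v v' _ ih =>
    rcases ih with rfl | ⟨hv, hv', hid⟩
    · left; rfl
    · right; exact ⟨hv', hv, fun u => (hid u).symm⟩
  | trans v m v' _ _ ih1 ih2 =>
    rcases ih1 with rfl | ⟨hv, hm, hid1⟩
    · exact ih2
    rcases ih2 with rfl | ⟨hm', hv', hid2⟩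
    · right; exact ⟨hv, hm, hid1⟩
    right
    refine ⟨hv, hv', fun u => ?_⟩
    refine (ENNReal.mul_left_inj hm ?_).mp ?_
    · match m with
      | .inl y => exact pr_ne_top _
      | .inr z => exact pr_ne_top _
    calc dmPu μ U' Y Z u v * dmP μ Y Z v' * dmP μ Y Z m
        = (dmPu μ U' Y Z u v * dmP μ Y Z m) * dmP μ Y Z v' := by ring
    _ = (dmPu μ U' Y Z u m * dmP μ Y Z v) * dmP μ Y Z v' := by rw [hid1]
    _ = (dmPu μ U' Y Z u m * dmP μ Y Z v') * dmP μ Y Z v := by ring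
    _ = (dmPu μ U' Y Z u v' * dmP μ Y Z m) * dmP μ Y Z v := by rw [hid2]
    _ = _ := by ring

lemma eqv_class_eq {R : (ℕ ⊕ ℕ) → (ℕ ⊕ ℕ) → Prop} {a b : ℕ ⊕ ℕ}
    (h : Relation.EqvGen R a b) :
    {v | Relation.EqvGen R a v} = {v | Relation.EqvGen R b v} := by
  ext v
  simp only [Set.mem_setOf_eq]
  exact ⟨fun hv => (Relation.EqvGen.symm _ _ h).trans _ _ _ hv,
    fun hv => h.trans _ _ _ hv⟩

lemma eqv_of_class_eq {R : (ℕ ⊕ ℕ) → (ℕ ⊕ ℕ) → Prop} {a b : ℕ ⊕ ℕ}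
    (h : {v | Relation.EqvGen R a v} = {v | Relation.EqvGen R b v}) :
    Relation.EqvGen R a b := by
  have : b ∈ {v | Relation.EqvGen R b v} := Relation.EqvGen.refl b
  rw [← h] at this
  exact this

lemma double_markov (h1 : CondIndep μ U' Z Y) (h2 : CondIndep μ U' Y Z) :
    ∃ (f g : ℕ → Set (ℕ ⊕ ℕ)),
      (∀ ω ∈ μ.support, f (Y ω) = g (Z ω)) ∧
      CondIndep μ (fun ω => (Y ω, Z ω)) U' (fun ω => f (Y ω)) := by
  classical
  set R := dmRel μ Y Z with hR
  refine ⟨fun y => {v | Relation.EqvGen R (.inl y) v},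
    fun z => {v | Relation.EqvGen R (.inr z) v}, ?_, ?_⟩
  · intro ω hω
    apply eqv_class_eq
    apply Relation.EqvGen.rel
    show pr μ {ω' | Y ω' = Y ω ∧ Z ω' = Z ω} ≠ 0
    intro h0
    exact (PMF.mem_support_iff μ ω).mp hω (le_antisymm
      (le_trans (mem_le_pr (E := {ω' | Y ω' = Y ω ∧ Z ω' = Z ω}) ⟨rfl, rfl⟩) h0.le) (zero_le))
  · set f : ℕ → Set (ℕ ⊕ ℕ) := fun y => {v | Relation.EqvGen R (.inl y) v} with hf
    intro p u w
    obtain ⟨y0, z0⟩ := p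
    by_cases hw : f y0 = w
    swap
    · have he : ∀ (P : Ω → Prop),
          pr μ {ω | (fun ω => (Y ω, Z ω)) ω = (y0, z0) ∧ P ω ∧ (fun ω => f (Y ω)) ω = w}
            = 0 := by
        intro P
        rw [show {ω | (fun ω => (Y ω, Z ω)) ω = (y0, z0) ∧ P ω ∧ (fun ω => f (Y ω)) ω = w}
            = (∅ : Set Ω) from ?_, pr_empty]
        ext ω
        simp only [Set.mem_setOf_eq, Prod.mk.injEq, Set.mem_empty_iff_false, iff_false,
          not_and]
        rintro ⟨hy, -⟩ - hfw
        rw [hy] at hfw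
        exact hw hfw
      have he2 : pr μ {ω | (fun ω => (Y ω, Z ω)) ω = (y0, z0) ∧ (fun ω => f (Y ω)) ω = w}
          = 0 := by
        rw [show {ω | (fun ω => (Y ω, Z ω)) ω = (y0, z0) ∧ (fun ω => f (Y ω)) ω = w}
            = (∅ : Set Ω) from ?_, pr_empty]
        ext ω
        simp only [Set.mem_setOf_eq, Prod.mk.injEq, Set.mem_empty_iff_false, iff_false,
          not_and]
        rintro ⟨hy, -⟩ hfw
        rw [hy] at hfw
        exact hw hfw
      rw [he (fun ω => U' ω = u), he2, zero_mul, zero_mul]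
    · set q := pr μ {ω | Y ω = y0 ∧ Z ω = z0} with hqdef
      by_cases hq : q = 0
      · have hsub : ∀ (E : Set Ω), E ⊆ {ω | Y ω = y0 ∧ Z ω = z0} → pr μ E = 0 := fun E hE =>
          le_antisymm (le_trans (pr_mono hE) hq.le) (zero_le)
        rw [hsub {ω | (fun ω => (Y ω, Z ω)) ω = (y0, z0) ∧ U' ω = u ∧ (fun ω => f (Y ω)) ω = w}
            (fun ω h => by
              obtain ⟨h1', -⟩ := h
              simp only [Prod.mk.injEq] at h1'
              exact h1'),
          hsub {ω | (fun ω => (Y ω, Z ω)) ω = (y0, z0) ∧ (fun ω => f (Y ω)) ω = w}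
            (fun ω h => by
              obtain ⟨h1', -⟩ := h
              simp only [Prod.mk.injEq] at h1'
              exact h1'),
          zero_mul, zero_mul]
      · -- main case
        have eJ : pr μ {ω | (fun ω => (Y ω, Z ω)) ω = (y0, z0) ∧ U' ω = u
              ∧ (fun ω => f (Y ω)) ω = w}
            = pr μ {ω | U' ω = u ∧ Y ω = y0 ∧ Z ω = z0} := pr_congr' fun ω => by
          simp only [Set.mem_setOf_eq, Prod.mk.injEq]
          constructor
          · rintro ⟨⟨hy, hz⟩, hu, -⟩; exact ⟨hu, hy, hz⟩
          · rintro ⟨hu, hy, hz⟩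
            refine ⟨⟨hy, hz⟩, hu, ?_⟩
            rw [hy]; exact hw
        have eQ : pr μ {ω | (fun ω => (Y ω, Z ω)) ω = (y0, z0) ∧ (fun ω => f (Y ω)) ω = w}
            = q := pr_congr' fun ω => by
          simp only [Set.mem_setOf_eq, Prod.mk.injEq]
          constructor
          · rintro ⟨⟨hy, hz⟩, -⟩; exact ⟨hy, hz⟩
          · rintro ⟨hy, hz⟩
            refine ⟨⟨hy, hz⟩, ?_⟩
            rw [hy]; exact hw
        rw [eJ, eQ]
        have eW : pr μ {ω | (fun ω => f (Y ω)) ω = w}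
            = ∑' y' : ℕ, (if f y' = w then pr μ {ω | Y ω = y'} else 0) := by
          rw [pr_fiber μ Y]
          refine tsum_congr fun y' => ?_
          split
          · refine pr_congr' fun ω => ?_
            simp only [Set.mem_inter_iff, Set.mem_setOf_eq]
            constructor
            · rintro ⟨-, hy⟩; exact hy
            · intro hy; refine ⟨?_, hy⟩; rw [hy]; assumption
          · rw [show ({ω | (fun ω => f (Y ω)) ω = w} ∩ {ω | Y ω = y'}) = (∅ : Set Ω)
                from ?_, pr_empty]
            ext ω
            simp only [Set.mem_inter_iff, Set.mem_setOf_eq, Set.mem_empty_iff_false,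
              iff_false, not_and]
            intro hfw hy
            rw [hy] at hfw
            exact absurd hfw (by assumption)
        have eUW : pr μ {ω | U' ω = u ∧ (fun ω => f (Y ω)) ω = w}
            = ∑' y' : ℕ, (if f y' = w then pr μ {ω | U' ω = u ∧ Y ω = y'} else 0) := by
          rw [pr_fiber μ Y]
          refine tsum_congr fun y' => ?_
          split
          · refine pr_congr' fun ω => ?_
            simp only [Set.mem_inter_iff, Set.mem_setOf_eq]
            constructor
            · rintro ⟨⟨hu, -⟩, hy⟩; exact ⟨hu, hy⟩
            · rintro ⟨hu, hy⟩; refine ⟨⟨hu, ?_⟩, hy⟩; rw [hy]; assumption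
          · rw [show ({ω | U' ω = u ∧ (fun ω => f (Y ω)) ω = w} ∩ {ω | Y ω = y'})
                = (∅ : Set Ω) from ?_, pr_empty]
            ext ω
            simp only [Set.mem_inter_iff, Set.mem_setOf_eq, Set.mem_empty_iff_false,
              iff_false, not_and]
            rintro ⟨-, hfw⟩ hy
            rw [hy] at hfw
            exact absurd hfw (by assumption)
        rw [eW, eUW, ← ENNReal.tsum_mul_left, ← ENNReal.tsum_mul_left]
        refine tsum_congr fun y' => ?_
        split
        swap
        · simp
        · -- termwise : J * P(y') = q * Pu(u,y')
          rename_i hfy'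
          have hPy0 : pr μ {ω | Y ω = y0} ≠ 0 := fun h0 =>
            hq (le_antisymm (le_trans (pr_mono fun ω h => h.1) h0.le) (zero_le))
          have hcross : pr μ {ω | U' ω = u ∧ Y ω = y0} * pr μ {ω | Y ω = y'}
              = pr μ {ω | U' ω = u ∧ Y ω = y'} * pr μ {ω | Y ω = y0} := by
            have hEqv : Relation.EqvGen R (.inl y0) (.inl y') :=
              eqv_of_class_eq (hw.trans hfy'.symm)
            exact dm_cross h1 h2 hEqv u
          have k1 := h1 u z0 y0
          have e1 : pr μ {ω | U' ω = u ∧ Z ω = z0 ∧ Y ω = y0}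
              = pr μ {ω | U' ω = u ∧ Y ω = y0 ∧ Z ω = z0} :=
            pr_congr' fun ω => by simp only [Set.mem_setOf_eq]; tauto
          have e2 : pr μ {ω | Z ω = z0 ∧ Y ω = y0} = q :=
            pr_congr' fun ω => by simp only [Set.mem_setOf_eq]; tauto
          rw [e1, e2] at k1
          -- k1 : J * P(y0) = Pu(u,y0) * q
          refine (ENNReal.mul_left_inj hPy0 (pr_ne_top _)).mp ?_
          calc pr μ {ω | U' ω = u ∧ Y ω = y0 ∧ Z ω = z0} * pr μ {ω | Y ω = y'}
                * pr μ {ω | Y ω = y0}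
              = (pr μ {ω | U' ω = u ∧ Y ω = y0 ∧ Z ω = z0} * pr μ {ω | Y ω = y0})
                * pr μ {ω | Y ω = y'} := by ring
          _ = (pr μ {ω | U' ω = u ∧ Y ω = y0} * q) * pr μ {ω | Y ω = y'} := by rw [k1]
          _ = (pr μ {ω | U' ω = u ∧ Y ω = y0} * pr μ {ω | Y ω = y'}) * q := by ring
          _ = (pr μ {ω | U' ω = u ∧ Y ω = y'} * pr μ {ω | Y ω = y0}) * q := by rw [hcross]
          _ = _ := by ring

end DM


section PL

variable {τ τA τB βτ βA βB : Type} {U' : Ω → κ}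

lemma common_funDep {V : Ω → Set (ℕ ⊕ ℕ)} {Y Z Xv : Ω → ℕ} {f g : ℕ → Set (ℕ ⊕ ℕ)}
    (hY : ∀ ω ∈ μ.support, V ω = f (Y ω)) (hZ : ∀ ω ∈ μ.support, V ω = g (Z ω))
    (hCI : CondIndep μ Y Z Xv) : FunDep μ Xv V := by
  classical
  refine ⟨fun x => if hx : ∃ ω, ω ∈ μ.support ∧ Xv ω = x then V hx.choose else ∅,
    fun ω hω => ?_⟩
  have hx : ∃ ω', ω' ∈ μ.support ∧ Xv ω' = Xv ω := ⟨ω, hω, rfl⟩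
  show V ω = if hx' : ∃ ω', ω' ∈ μ.support ∧ Xv ω' = Xv ω then V hx'.choose else ∅
  rw [dif_pos hx]
  obtain ⟨hω0, hxv⟩ := hx.choose_spec
  set ω0 := hx.choose
  -- show V ω = V ω0
  have h1 : μ ω ≠ 0 := (PMF.mem_support_iff μ ω).mp hω
  have h0 : μ ω0 ≠ 0 := (PMF.mem_support_iff μ ω0).mp hω0
  have key := hCI (Y ω) (Z ω0) (Xv ω)
  have hr1 : pr μ {ω' | Y ω' = Y ω ∧ Xv ω' = Xv ω} ≠ 0 := by
    intro hcon
    exact h1 (le_antisymm (le_trans (mem_le_pr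
      (E := {ω' | Y ω' = Y ω ∧ Xv ω' = Xv ω}) ⟨rfl, rfl⟩) hcon.le) (zero_le))
  have hr2 : pr μ {ω' | Z ω' = Z ω0 ∧ Xv ω' = Xv ω} ≠ 0 := by
    intro hcon
    exact h0 (le_antisymm (le_trans (mem_le_pr
      (E := {ω' | Z ω' = Z ω0 ∧ Xv ω' = Xv ω}) ⟨rfl, hxv⟩) hcon.le) (zero_le))
  have hne : pr μ {ω' | Y ω' = Y ω ∧ Z ω' = Z ω0 ∧ Xv ω' = Xv ω} ≠ 0 := by
    intro hcon
    rw [hcon, zero_mul] at key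
    exact (mul_ne_zero hr1 hr2) key.symm
  obtain ⟨ω1, hmem, hω1⟩ := pr_ne_zero_iff.mp hne
  obtain ⟨hY1, hZ1, -⟩ := hmem
  have hω1s : ω1 ∈ μ.support := (PMF.mem_support_iff μ ω1).mpr hω1
  calc V ω = f (Y ω) := hY ω hω
  _ = f (Y ω1) := by rw [hY1]
  _ = V ω1 := (hY ω1 hω1s).symm
  _ = g (Z ω1) := hZ ω1 hω1s
  _ = g (Z ω0) := by rw [hZ1]
  _ = V ω0 := (hZ ω0 hω0).symm

lemma pl_red {A : Ω → τ} {TA : Ω → βτ} {f : τ → βτ}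
    (hf : ∀ ω, μ ω ≠ 0 → TA ω = f (A ω)) {a : τ} {s : βτ} (ha : f a = s) (u : κ) :
    pr μ {ω | U' ω = u ∧ A ω = a ∧ TA ω = s} = pr μ {ω | U' ω = u ∧ A ω = a} :=
  pr_congr fun ω h0 => by
    simp only [Set.mem_setOf_eq]
    exact ⟨fun h => ⟨h.1, h.2.1⟩, fun h => ⟨h.1, h.2, by rw [hf ω h0, h.2, ha]⟩⟩

lemma pl_k {A : Ω → τ} {TA : Ω → βτ} {f : τ → βτ}
    (hUA : CondIndep μ U' A TA) (hf : ∀ ω, μ ω ≠ 0 → TA ω = f (A ω))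
    {a : τ} {s : βτ} (ha : f a = s) (u : κ) :
    pr μ {ω | U' ω = u ∧ A ω = a} * pr μ {ω | TA ω = s}
      = pr μ {ω | U' ω = u ∧ TA ω = s} * pr μ {ω | A ω = a} := by
  have e1 := pl_red (μ := μ) (U' := U') hf ha u
  have e2 : pr μ {ω | A ω = a ∧ TA ω = s} = pr μ {ω | A ω = a} :=
    pr_congr fun ω h0 => by
      simp only [Set.mem_setOf_eq]
      exact ⟨fun h => h.1, fun h => ⟨h, by rw [hf ω h0, h, ha]⟩⟩
  have := hUA u a s
  rw [e1, e2] at this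
  exact this

lemma pl_le {A : Ω → τ} {TA : Ω → βτ} {f : τ → βτ}
    (hf : ∀ ω, μ ω ≠ 0 → TA ω = f (A ω)) {a : τ} {s : βτ} (ha : f a = s) (u : κ) :
    pr μ {ω | U' ω = u ∧ A ω = a} ≤ pr μ {ω | TA ω = s} := by
  rw [← pl_red (μ := μ) (U' := U') hf ha u]
  exact pr_mono fun ω h => h.2.2

lemma pl_c1 {A : Ω → τ} {TA : Ω → βτ} {f : τ → βτ}
    (hUA : CondIndep μ U' A TA) (hf : ∀ ω, μ ω ≠ 0 → TA ω = f (A ω))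
    {a a' : τ} {s : βτ} (ha : f a = s) (ha' : f a' = s) (u u' : κ) :
    pr μ {ω | U' ω = u ∧ A ω = a} * pr μ {ω | U' ω = u' ∧ A ω = a'}
      = pr μ {ω | U' ω = u ∧ A ω = a'} * pr μ {ω | U' ω = u' ∧ A ω = a} := by
  by_cases hS : pr μ {ω | TA ω = s} = 0
  · have z1 : pr μ {ω | U' ω = u ∧ A ω = a} = 0 :=
      le_antisymm (le_trans (pl_le hf ha u) hS.le) (zero_le)
    have z2 : pr μ {ω | U' ω = u ∧ A ω = a'} = 0 :=
      le_antisymm (le_trans (pl_le hf ha' u) hS.le) (zero_le)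
    rw [z1, z2, zero_mul, zero_mul]
  · have hne : pr μ {ω | TA ω = s} * pr μ {ω | TA ω = s} ≠ 0 := mul_ne_zero hS hS
    have hnt : pr μ {ω | TA ω = s} * pr μ {ω | TA ω = s} ≠ ⊤ :=
      ENNReal.mul_ne_top (pr_ne_top _) (pr_ne_top _)
    refine (ENNReal.mul_left_inj hne hnt).mp ?_
    calc pr μ {ω | U' ω = u ∧ A ω = a} * pr μ {ω | U' ω = u' ∧ A ω = a'}
          * (pr μ {ω | TA ω = s} * pr μ {ω | TA ω = s})
        = (pr μ {ω | U' ω = u ∧ A ω = a} * pr μ {ω | TA ω = s})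
          * (pr μ {ω | U' ω = u' ∧ A ω = a'} * pr μ {ω | TA ω = s}) := by ring
    _ = (pr μ {ω | U' ω = u ∧ TA ω = s} * pr μ {ω | A ω = a})
          * (pr μ {ω | U' ω = u' ∧ TA ω = s} * pr μ {ω | A ω = a'}) := by
        rw [pl_k hUA hf ha u, pl_k hUA hf ha' u']
    _ = (pr μ {ω | U' ω = u ∧ TA ω = s} * pr μ {ω | A ω = a'})
          * (pr μ {ω | U' ω = u' ∧ TA ω = s} * pr μ {ω | A ω = a}) := by ring
    _ = (pr μ {ω | U' ω = u ∧ A ω = a'} * pr μ {ω | TA ω = s})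
          * (pr μ {ω | U' ω = u' ∧ A ω = a} * pr μ {ω | TA ω = s}) := by
        rw [pl_k hUA hf ha' u, pl_k hUA hf ha u']
    _ = _ := by ring

lemma pair_merge {A : Ω → τA} {B : Ω → τB} {TA : Ω → βA} {TB : Ω → βB}
    {fA : τA → βA} {fB : τB → βB}
    (hfA : ∀ ω, μ ω ≠ 0 → TA ω = fA (A ω)) (hfB : ∀ ω, μ ω ≠ 0 → TB ω = fB (B ω))
    (hAB : CondIndep μ A B U')
    (hUA : CondIndep μ U' A TA) (hUB : CondIndep μ U' B TB) :
    CondIndep μ U' (fun ω => (A ω, B ω)) (fun ω => (TA ω, TB ω)) := by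
  classical
  have nAB : ∀ (a : τA) (b : τB) (u : κ),
      pr μ {ω | U' ω = u ∧ A ω = a ∧ B ω = b} * pr μ {ω | U' ω = u}
        = pr μ {ω | U' ω = u ∧ A ω = a} * pr μ {ω | U' ω = u ∧ B ω = b} := by
    intro a b u
    have e1 : pr μ {ω | A ω = a ∧ B ω = b ∧ U' ω = u}
        = pr μ {ω | U' ω = u ∧ A ω = a ∧ B ω = b} :=
      pr_congr' fun ω => by simp only [Set.mem_setOf_eq]; tauto
    have e2 : pr μ {ω | A ω = a ∧ U' ω = u} = pr μ {ω | U' ω = u ∧ A ω = a} :=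
      pr_congr' fun ω => by simp only [Set.mem_setOf_eq]; tauto
    have e3 : pr μ {ω | B ω = b ∧ U' ω = u} = pr μ {ω | U' ω = u ∧ B ω = b} :=
      pr_congr' fun ω => by simp only [Set.mem_setOf_eq]; tauto
    have := hAB a b u
    rw [e1, e2, e3] at this
    exact this
  have tstar : ∀ (u u' : κ) (a a' : τA) (b b' : τB), fA a = fA a' → fB b = fB b' →
      pr μ {ω | U' ω = u ∧ A ω = a ∧ B ω = b}
        * pr μ {ω | U' ω = u' ∧ A ω = a' ∧ B ω = b'}
      = pr μ {ω | U' ω = u ∧ A ω = a' ∧ B ω = b'}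
        * pr μ {ω | U' ω = u' ∧ A ω = a ∧ B ω = b} := by
    intro u u' a a' b b' hsa hsb
    by_cases hu : pr μ {ω | U' ω = u} = 0
    · have z1 : pr μ {ω | U' ω = u ∧ A ω = a ∧ B ω = b} = 0 :=
        le_antisymm (le_trans (pr_mono fun ω h => h.1) hu.le) (zero_le)
      have z2 : pr μ {ω | U' ω = u ∧ A ω = a' ∧ B ω = b'} = 0 :=
        le_antisymm (le_trans (pr_mono fun ω h => h.1) hu.le) (zero_le)
      rw [z1, z2, zero_mul, zero_mul]
    by_cases hu' : pr μ {ω | U' ω = u'} = 0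
    · have z1 : pr μ {ω | U' ω = u' ∧ A ω = a' ∧ B ω = b'} = 0 :=
        le_antisymm (le_trans (pr_mono fun ω h => h.1) hu'.le) (zero_le)
      have z2 : pr μ {ω | U' ω = u' ∧ A ω = a ∧ B ω = b} = 0 :=
        le_antisymm (le_trans (pr_mono fun ω h => h.1) hu'.le) (zero_le)
      rw [z1, z2, mul_zero, mul_zero]
    have hne : pr μ {ω | U' ω = u} * pr μ {ω | U' ω = u'} ≠ 0 := mul_ne_zero hu hu'
    have hnt : pr μ {ω | U' ω = u} * pr μ {ω | U' ω = u'} ≠ ⊤ :=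
      ENNReal.mul_ne_top (pr_ne_top _) (pr_ne_top _)
    refine (ENNReal.mul_left_inj hne hnt).mp ?_
    calc pr μ {ω | U' ω = u ∧ A ω = a ∧ B ω = b}
          * pr μ {ω | U' ω = u' ∧ A ω = a' ∧ B ω = b'}
          * (pr μ {ω | U' ω = u} * pr μ {ω | U' ω = u'})
        = (pr μ {ω | U' ω = u ∧ A ω = a ∧ B ω = b} * pr μ {ω | U' ω = u})
          * (pr μ {ω | U' ω = u' ∧ A ω = a' ∧ B ω = b'} * pr μ {ω | U' ω = u'}) := by ring
    _ = (pr μ {ω | U' ω = u ∧ A ω = a} * pr μ {ω | U' ω = u ∧ B ω = b})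
          * (pr μ {ω | U' ω = u' ∧ A ω = a'} * pr μ {ω | U' ω = u' ∧ B ω = b'}) := by
        rw [nAB a b u, nAB a' b' u']
    _ = (pr μ {ω | U' ω = u ∧ A ω = a} * pr μ {ω | U' ω = u' ∧ A ω = a'})
          * (pr μ {ω | U' ω = u ∧ B ω = b} * pr μ {ω | U' ω = u' ∧ B ω = b'}) := by ring
    _ = (pr μ {ω | U' ω = u ∧ A ω = a'} * pr μ {ω | U' ω = u' ∧ A ω = a})
          * (pr μ {ω | U' ω = u ∧ B ω = b'} * pr μ {ω | U' ω = u' ∧ B ω = b}) := by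
        rw [pl_c1 hUA hfA rfl hsa.symm u u', pl_c1 hUB hfB rfl hsb.symm u u']
    _ = (pr μ {ω | U' ω = u ∧ A ω = a'} * pr μ {ω | U' ω = u ∧ B ω = b'})
          * (pr μ {ω | U' ω = u' ∧ A ω = a} * pr μ {ω | U' ω = u' ∧ B ω = b}) := by ring
    _ = (pr μ {ω | U' ω = u ∧ A ω = a' ∧ B ω = b'} * pr μ {ω | U' ω = u})
          * (pr μ {ω | U' ω = u' ∧ A ω = a ∧ B ω = b} * pr μ {ω | U' ω = u'}) := by
        rw [nAB a' b' u, nAB a b u']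
    _ = _ := by ring
  have eP : ∀ (a : τA) (b : τB), pr μ {ω | A ω = a ∧ B ω = b}
      = ∑' u' : κ, pr μ {ω | U' ω = u' ∧ A ω = a ∧ B ω = b} := by
    intro a b
    rw [pr_fiber μ U' {ω | A ω = a ∧ B ω = b}]
    exact tsum_congr fun u' => pr_congr' fun ω => by
      simp only [Set.mem_inter_iff, Set.mem_setOf_eq]; tauto
  have dstar : ∀ (u : κ) (a a' : τA) (b b' : τB), fA a = fA a' → fB b = fB b' →
      pr μ {ω | U' ω = u ∧ A ω = a ∧ B ω = b} * pr μ {ω | A ω = a' ∧ B ω = b'}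
      = pr μ {ω | U' ω = u ∧ A ω = a' ∧ B ω = b'} * pr μ {ω | A ω = a ∧ B ω = b} := by
    intro u a a' b b' hsa hsb
    rw [eP a' b', eP a b, ← ENNReal.tsum_mul_left, ← ENNReal.tsum_mul_left]
    exact tsum_congr fun u' => tstar u u' a a' b b' hsa hsb
  intro u p st
  obtain ⟨a, b⟩ := p
  obtain ⟨s, t⟩ := st
  by_cases hst : fA a = s ∧ fB b = t
  · obtain ⟨hs, ht⟩ := hst
    have e1 : pr μ {ω | U' ω = u ∧ (fun ω => (A ω, B ω)) ω = (a, b)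
          ∧ (fun ω => (TA ω, TB ω)) ω = (s, t)}
        = pr μ {ω | U' ω = u ∧ A ω = a ∧ B ω = b} := pr_congr fun ω h0 => by
      simp only [Set.mem_setOf_eq, Prod.mk.injEq]
      constructor
      · rintro ⟨hu, ⟨hA, hB⟩, -⟩; exact ⟨hu, hA, hB⟩
      · rintro ⟨hu, hA, hB⟩
        exact ⟨hu, ⟨hA, hB⟩, by rw [hfA ω h0, hA, hs], by rw [hfB ω h0, hB, ht]⟩
    have e2 : pr μ {ω | (fun ω => (A ω, B ω)) ω = (a, b)
          ∧ (fun ω => (TA ω, TB ω)) ω = (s, t)}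
        = pr μ {ω | A ω = a ∧ B ω = b} := pr_congr fun ω h0 => by
      simp only [Set.mem_setOf_eq, Prod.mk.injEq]
      constructor
      · rintro ⟨⟨hA, hB⟩, -⟩; exact ⟨hA, hB⟩
      · rintro ⟨hA, hB⟩
        exact ⟨⟨hA, hB⟩, by rw [hfA ω h0, hA, hs], by rw [hfB ω h0, hB, ht]⟩
    have eT : pr μ {ω | (fun ω => (TA ω, TB ω)) ω = (s, t)}
        = ∑' a' : τA, ∑' b' : τB,
          (if fA a' = s ∧ fB b' = t then pr μ {ω | A ω = a' ∧ B ω = b'} else 0) := by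
      rw [pr_fiber μ A {ω | (fun ω => (TA ω, TB ω)) ω = (s, t)}]
      refine tsum_congr fun a' => ?_
      rw [pr_fiber μ B ({ω | (fun ω => (TA ω, TB ω)) ω = (s, t)} ∩ {ω | A ω = a'})]
      refine tsum_congr fun b' => ?_
      by_cases hc : fA a' = s ∧ fB b' = t
      · rw [if_pos hc]
        refine pr_congr fun ω h0 => ?_
        simp only [Set.mem_inter_iff, Set.mem_setOf_eq, Prod.mk.injEq]
        constructor
        · rintro ⟨⟨-, hA⟩, hB⟩; exact ⟨hA, hB⟩
        · rintro ⟨hA, hB⟩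
          exact ⟨⟨⟨by rw [hfA ω h0, hA, hc.1], by rw [hfB ω h0, hB, hc.2]⟩, hA⟩, hB⟩
      · rw [if_neg hc,
          show pr μ (({ω | (fun ω => (TA ω, TB ω)) ω = (s, t)} ∩ {ω | A ω = a'})
            ∩ {ω | B ω = b'}) = pr μ (∅ : Set Ω) from pr_congr fun ω h0 => by
            simp only [Set.mem_inter_iff, Set.mem_setOf_eq, Prod.mk.injEq,
              Set.mem_empty_iff_false, iff_false, not_and]
            rintro ⟨hTT, hA⟩ hB
            exact hc ⟨by rw [← hA, ← hfA ω h0]; exact hTT.1,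
              by rw [← hB, ← hfB ω h0]; exact hTT.2⟩, pr_empty]
    have eUT : pr μ {ω | U' ω = u ∧ (fun ω => (TA ω, TB ω)) ω = (s, t)}
        = ∑' a' : τA, ∑' b' : τB,
          (if fA a' = s ∧ fB b' = t then pr μ {ω | U' ω = u ∧ A ω = a' ∧ B ω = b'}
            else 0) := by
      rw [pr_fiber μ A {ω | U' ω = u ∧ (fun ω => (TA ω, TB ω)) ω = (s, t)}]
      refine tsum_congr fun a' => ?_
      rw [pr_fiber μ B ({ω | U' ω = u ∧ (fun ω => (TA ω, TB ω)) ω = (s, t)}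
        ∩ {ω | A ω = a'})]
      refine tsum_congr fun b' => ?_
      by_cases hc : fA a' = s ∧ fB b' = t
      · rw [if_pos hc]
        refine pr_congr fun ω h0 => ?_
        simp only [Set.mem_inter_iff, Set.mem_setOf_eq, Prod.mk.injEq]
        constructor
        · rintro ⟨⟨⟨hu, -⟩, hA⟩, hB⟩; exact ⟨hu, hA, hB⟩
        · rintro ⟨hu, hA, hB⟩
          exact ⟨⟨⟨hu, by rw [hfA ω h0, hA, hc.1], by rw [hfB ω h0, hB, hc.2]⟩, hA⟩, hB⟩
      · rw [if_neg hc,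
          show pr μ (({ω | U' ω = u ∧ (fun ω => (TA ω, TB ω)) ω = (s, t)} ∩ {ω | A ω = a'})
            ∩ {ω | B ω = b'}) = pr μ (∅ : Set Ω) from pr_congr fun ω h0 => by
            simp only [Set.mem_inter_iff, Set.mem_setOf_eq, Prod.mk.injEq,
              Set.mem_empty_iff_false, iff_false, not_and]
            rintro ⟨⟨-, hTT⟩, hA⟩ hB
            exact hc ⟨by rw [← hA, ← hfA ω h0]; exact hTT.1,
              by rw [← hB, ← hfB ω h0]; exact hTT.2⟩, pr_empty]
    rw [e1, e2, eT, eUT, ← ENNReal.tsum_mul_left, ← ENNReal.tsum_mul_right]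
    refine tsum_congr fun a' => ?_
    rw [← ENNReal.tsum_mul_left, ← ENNReal.tsum_mul_right]
    refine tsum_congr fun b' => ?_
    by_cases hc : fA a' = s ∧ fB b' = t
    · rw [if_pos hc, if_pos hc]
      exact dstar u a a' b b' (hs.trans hc.1.symm) (ht.trans hc.2.symm)
    · rw [if_neg hc, if_neg hc, mul_zero, zero_mul]
  · have z1 : pr μ {ω | U' ω = u ∧ (fun ω => (A ω, B ω)) ω = (a, b)
        ∧ (fun ω => (TA ω, TB ω)) ω = (s, t)} = pr μ (∅ : Set Ω) := pr_congr fun ω h0 => by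
      simp only [Set.mem_setOf_eq, Prod.mk.injEq, Set.mem_empty_iff_false, iff_false,
        not_and]
      rintro - ⟨hA, hB⟩ hT1 hT2
      exact hst ⟨by rw [← hA, ← hfA ω h0]; exact hT1,
        by rw [← hB, ← hfB ω h0]; exact hT2⟩
    have z2 : pr μ {ω | (fun ω => (A ω, B ω)) ω = (a, b)
        ∧ (fun ω => (TA ω, TB ω)) ω = (s, t)} = pr μ (∅ : Set Ω) := pr_congr fun ω h0 => by
      simp only [Set.mem_setOf_eq, Prod.mk.injEq, Set.mem_empty_iff_false, iff_false,
        not_and]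
      rintro ⟨hA, hB⟩ hT1 hT2
      exact hst ⟨by rw [← hA, ← hfA ω h0]; exact hT1,
        by rw [← hB, ← hfB ω h0]; exact hT2⟩
    rw [z1, z2, pr_empty, zero_mul, mul_zero]

end PL

/-! Graph-structure lemmas. -/

section Graph

variable {n k : ℕ} {C1 C2 : Finset (Fin n)} {A : Fin k → Finset (Fin n)} {b : Fin k → Fin n}

def cnode {n : ℕ} (k : ℕ) (i : Fin n) (m : ℕ) : BNode n k :=
  if h0 : m = 0 then .y i else if h : m ≤ k then .x i ⟨m - 1, by omega⟩ else .z i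

def inChain {n k : ℕ} (i : Fin n) : BNode n k → Prop
  | .y i' => i' = i
  | .x i' _ => i' = i
  | .z i' => i' = i
  | .u _ => False

def otherChain {n k : ℕ} (i : Fin n) : BNode n k → Prop
  | .y i' => i' ≠ i
  | .x i' _ => i' ≠ i
  | .z i' => i' ≠ i
  | .u _ => False

def rnk {n k : ℕ} : BNode n k → ℕ
  | .y _ => 0
  | .x _ j => (j : ℕ) + 1
  | .z _ => k + 1
  | .u _ => 0

lemma cnode_zero (i : Fin n) : cnode k i 0 = .y i := rfl

lemma cnode_mid (i : Fin n) {m : ℕ} (h1 : 1 ≤ m) (h2 : m ≤ k) :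
    cnode k i m = .x i ⟨m - 1, by omega⟩ := by
  rw [cnode, dif_neg (by omega), dif_pos h2]

lemma cnode_last (i : Fin n) {m : ℕ} (h : k < m) : cnode k i m = .z i := by
  rw [cnode, dif_neg (by omega), dif_neg (by omega)]

lemma rnk_cnode (hk : 1 ≤ k) (i : Fin n) {m : ℕ} (hm : m ≤ k + 1) :
    rnk (cnode k i m) = m := by
  rcases Nat.eq_zero_or_pos m with h0 | h0
  · subst h0; rfl
  rcases Nat.lt_or_ge k m with h | h
  · rw [cnode_last i h, rnk]; omega
  · rw [cnode_mid i h0 h, rnk]; simp; omega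

lemma inChain_cnode (i : Fin n) (m : ℕ) : inChain i (cnode k i m) := by
  rw [cnode]
  split
  · exact rfl
  split
  · exact rfl
  · exact rfl

lemma inChain_unique {i i' : Fin n} {v : BNode n k} (h : inChain i v) (h' : inChain i' v) :
    i = i' := by
  cases v with
  | u => exact h.elim
  | y i0 => exact h ▸ h' ▸ rfl
  | z i0 => exact h ▸ h' ▸ rfl
  | x i0 j0 => exact h ▸ h' ▸ rfl

lemma edge1_chain (hk : 1 ≤ k) {i : Fin n} {v w : BNode n k}
    (he : edge1 n k C1 v w) (hv : inChain i v) : inChain i w ∧ rnk w = rnk v + 1 := by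
  cases v with
  | u => exact hv.elim
  | y i0 =>
    cases w with
    | u => exact he.elim
    | y => exact he.elim
    | z => exact he.elim
    | x i1 j1 =>
      obtain ⟨he1, he2⟩ := he
      refine ⟨he1 ▸ hv, ?_⟩
      simp [rnk, he2]
  | x i0 j0 =>
    cases w with
    | u => exact he.elim
    | y => exact he.elim
    | z i1 =>
      obtain ⟨he1, he2⟩ := he
      refine ⟨he1 ▸ hv, ?_⟩
      simp only [rnk]
      omega
    | x i1 j1 =>
      obtain ⟨he1, he2⟩ := he
      refine ⟨he1 ▸ hv, ?_⟩
      simp only [rnk]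
      omega
  | z i0 =>
    cases w with
    | u => exact he.elim
    | y => exact he.elim
    | z => exact he.elim
    | x => exact he.elim

lemma desc1 (hk : 1 ≤ k) {i : Fin n} {v w : BNode n k}
    (h : Relation.ReflTransGen (edge1 n k C1) v w) (hv : inChain i v) :
    w = v ∨ (inChain i w ∧ rnk v < rnk w) := by
  induction h with
  | refl => exact Or.inl rfl
  | tail hseg he ih =>
    rename_i mid w'
    rcases ih with rfl | ⟨hch, hlt⟩
    · right
      have := edge1_chain hk (C1 := C1) he hv
      exact ⟨this.1, by omega⟩
    · right
      have := edge1_chain hk (C1 := C1) he hch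
      exact ⟨this.1, by omega⟩

lemma edge1_to_chain {i : Fin n} {v w : BNode n k} (he : edge1 n k C1 v w)
    (hw : inChain i w) (hv : otherChain i v) : False := by
  cases v with
  | u => exact hv
  | y i0 =>
    cases w with
    | u => exact he
    | y => exact he
    | z => exact he
    | x i1 j1 => exact hv (he.1.trans hw)
  | x i0 j0 =>
    cases w with
    | u => exact he
    | y => exact he
    | z i1 => exact hv (he.1.trans hw)
    | x i1 j1 => exact hv (he.1.trans hw)
  | z i0 =>
    cases w with
    | u => exact he
    | y => exact he
    | z => exact he
    | x => exact he

lemma not_inChain_otherChain {i : Fin n} {v : BNode n k} (h : otherChain i v) :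
    ¬ inChain i v := by
  cases v with
  | u => exact fun hc => hc
  | y i0 => exact fun hc => h hc
  | z i0 => exact fun hc => h hc
  | x i0 j0 => exact fun hc => h hc

lemma otherChain_nondesc1 (hk : 1 ≤ k) {i : Fin n} {v : BNode n k} (hv : otherChain i v)
    (m : ℕ) : v ∈ nonDescSet (edge1 n k C1) (cnode k i m) := by
  constructor
  · intro hR
    rcases desc1 hk hR (inChain_cnode i m) with rfl | ⟨hch, -⟩
    · exact not_inChain_otherChain hv (inChain_cnode i m)
    · exact not_inChain_otherChain hv hch
  · intro he
    exact edge1_to_chain he (inChain_cnode i m) hv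

lemma u_nondesc1 (hk : 1 ≤ k) {i : Fin n} (i' : Fin n) {m : ℕ} (hm : 1 ≤ m) :
    (BNode.u i' : BNode n k) ∈ nonDescSet (edge1 n k C1) (cnode k i m) := by
  constructor
  · intro hR
    rcases desc1 hk hR (inChain_cnode i m) with heq | ⟨hch, -⟩
    · rw [cnode] at heq
      split at heq
      · omega
      split at heq
      · exact absurd heq (by simp)
      · exact absurd heq (by simp)
    · exact hch
  · intro he
    rcases Nat.lt_or_ge k m with h | h
    · rw [cnode_last i h] at he; exact he
    · rw [cnode_mid i hm h] at he; exact he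

lemma u_nondesc1_y (hk : 1 ≤ k) {i i' : Fin n} (hne : i' ≠ i) :
    (BNode.u i' : BNode n k) ∈ nonDescSet (edge1 n k C1) (BNode.y i) := by
  constructor
  · intro hR
    rcases desc1 hk hR (show inChain i (BNode.y i : BNode n k) from rfl)
      with heq | ⟨hch, -⟩
    · exact absurd heq (by simp)
    · exact hch
  · exact fun he => hne he

lemma pre_nondesc1 (hk : 1 ≤ k) {i : Fin n} {l m : ℕ} (hl : l + 2 ≤ m) (hm : m ≤ k + 1) :
    (cnode k i l : BNode n k) ∈ nonDescSet (edge1 n k C1) (cnode k i m) := by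
  constructor
  · intro hR
    rcases desc1 hk hR (inChain_cnode i m) with heq | ⟨-, hlt⟩
    · have := congrArg (rnk (n := n) (k := k)) heq
      rw [rnk_cnode hk i (m := l) (by omega), rnk_cnode hk i (m := m) hm] at this
      omega
    · rw [rnk_cnode hk i (m := m) hm, rnk_cnode hk i (m := l) (by omega)] at hlt
      omega
  · intro he
    have := (edge1_chain hk (C1 := C1) he (inChain_cnode i l)).2
    rw [rnk_cnode hk i (m := m) hm, rnk_cnode hk i (m := l) (by omega)] at this
    omega

lemma par1 (hk : 1 ≤ k) (i : Fin n) {m : ℕ} (hm1 : 1 ≤ m) (hm2 : m ≤ k + 1) :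
    parentSet (edge1 n k C1) (cnode k i m) = {cnode k i (m - 1)} := by
  ext v
  simp only [parentSet, Set.mem_setOf_eq, Set.mem_singleton_iff]
  rcases Nat.lt_or_ge k m with hc | hc
  · -- m = k + 1, cnode = z i, parent = x i (k-1) = cnode k
    have hm : m = k + 1 := by omega
    subst hm
    rw [cnode_last i (by omega), cnode_mid i (by omega) (by omega)]
    cases v with
    | u => simp [edge1]
    | y => simp [edge1]
    | z => simp [edge1]
    | x i0 j0 =>
      show (i0 = i ∧ (j0 : ℕ) = k - 1) ↔ _
      constructor
      · rintro ⟨rfl, hj⟩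
        congr 1
        exact Fin.ext (by simpa using hj)
      · intro hh
        injection hh with h1 h2
        refine ⟨h1, ?_⟩
        rw [h2]
        show k + 1 - 1 - 1 = k - 1
        omega
  · rcases Nat.eq_or_lt_of_le hm1 with h1 | h1
    · -- m = 1 : cnode = x i 0, parent = y i
      have hm' : m = 1 := h1.symm
      subst hm'
      rw [cnode_mid i hm1 hc]
      simp only [Nat.sub_self, cnode_zero]
      cases v with
      | u => simp [edge1]
      | z => simp [edge1]
      | x i0 j0 =>
        show (i0 = i ∧ ((⟨1 - 1, _⟩ : Fin k) : ℕ) = (j0 : ℕ) + 1) ↔ _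
        constructor
        · rintro ⟨rfl, hj⟩
          simp at hj
        · intro hh
          exact absurd hh (by simp)
      | y i0 =>
        show (i0 = i ∧ (((⟨1 - 1, _⟩ : Fin k)) : ℕ) = 0) ↔ _
        constructor
        · rintro ⟨rfl, -⟩
          rfl
        · intro hh
          injection hh with h2
          exact ⟨h2, rfl⟩
    · -- 2 ≤ m ≤ k : cnode = x i (m-1), parent = x i (m-2)
      rw [cnode_mid i hm1 hc, cnode_mid i (by omega) (by omega)]
      cases v with
      | u => simp [edge1]
      | z => simp [edge1]
      | y i0 =>
        show (i0 = i ∧ (((⟨m - 1, _⟩ : Fin k)) : ℕ) = 0) ↔ _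
        constructor
        · rintro ⟨rfl, hj⟩
          simp at hj
          omega
        · intro hh
          exact absurd hh (by simp)
      | x i0 j0 =>
        show (i0 = i ∧ ((⟨m - 1, _⟩ : Fin k) : ℕ) = (j0 : ℕ) + 1) ↔ _
        constructor
        · rintro ⟨rfl, hj⟩
          simp at hj
          congr 1
          exact Fin.ext (by simp; omega)
        · intro hh
          injection hh with h2 h3
          refine ⟨h2, ?_⟩
          rw [h3]
          simp
          omega

lemma par1_y (i : Fin n) :
    parentSet (edge1 n k C1) (BNode.y i) = {BNode.u i} := by
  ext v
  simp only [parentSet, Set.mem_setOf_eq, Set.mem_singleton_iff]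
  cases v with
  | u i0 =>
    show i0 = i ↔ _
    constructor
    · rintro rfl; rfl
    · intro hh; injection hh with h1
  | y => simp [edge1]
  | z => simp [edge1]
  | x => simp [edge1]

lemma par2_y (i : Fin n) :
    parentSet (edge2 n k C2 A b) (BNode.y i) = {BNode.z i} := by
  ext v
  simp only [parentSet, Set.mem_setOf_eq, Set.mem_singleton_iff]
  cases v with
  | z i0 =>
    show i0 = i ↔ _
    constructor
    · rintro rfl; rfl
    · intro hh; injection hh with h1
  | y => simp [edge2]
  | u => simp [edge2]
  | x => simp [edge2]

lemma edge2_y_src {i : Fin n} {w : BNode n k} (he : edge2 n k C2 A b (BNode.y i) w) :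
    False := by
  cases w with
  | u => exact he
  | y => exact he
  | z => exact he
  | x => exact he

lemma u_nondesc2 {i : Fin n} (i' : Fin n) :
    (BNode.u i' : BNode n k) ∈ nonDescSet (edge2 n k C2 A b) (BNode.y i) := by
  constructor
  · intro hR
    rcases (Relation.ReflTransGen.cases_head hR) with heq | ⟨mid, he, -⟩
    · exact absurd heq.symm (by simp)
    · exact edge2_y_src he
  · intro he
    exact he

end Graph

section Extract

variable {Ω : Type} {μ : PMF Ω} {n k : ℕ} {C1 C2 : Finset (Fin n)}
  {A : Fin k → Finset (Fin n)} {b : Fin k → Fin n}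

open scoped Classical in
noncomputable def Rvar (X : BNode n k → Ω → ℕ) (i : Fin n) : Ω → (BNode n k → ℕ) :=
  fun ω v => if otherChain i v then X v ω else 0

noncomputable def Uminus (X : BNode n k → Ω → ℕ) (i : Fin n) : Ω → (Fin n → ℕ) :=
  fun ω i' => if i' = i then 0 else X (.u i') ω

lemma local1 (hk : 1 ≤ k) (X : BNode n k → Ω → ℕ)
    (h1 : SatisfiesBN μ X (edge1 n k C1)) (i : Fin n) {m : ℕ}
    (hm1 : 1 ≤ m) (hm2 : m ≤ k + 1) :
    CondIndep μ (X (cnode k i m))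
      (fun ω => (Ujoint X ω, Rvar X i ω,
        fun l => if l + 2 ≤ m then X (cnode k i l) ω else 0))
      (X (cnode k i (m - 1))) := by
  classical
  have hstep1 : CondIndep μ (X (cnode k i m))
      (fun ω => (Ujoint X ω, Rvar X i ω,
        fun l => if l + 2 ≤ m then X (cnode k i l) ω else 0))
      (fun ω => fun v : parentSet (edge1 n k C1) (cnode k i m) => X v.1 ω) := by
    refine condIndep_comp_middle (h1 (cnode k i m))
      (fun g => ((fun i' => if hh : (BNode.u i' : BNode n k)
            ∈ nonDescSet (edge1 n k C1) (cnode k i m) then g ⟨_, hh⟩ else 0),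
        (fun v => if hh : v ∈ nonDescSet (edge1 n k C1) (cnode k i m) ∧ otherChain i v
            then g ⟨v, hh.1⟩ else 0),
        (fun l => if hh : cnode k i l ∈ nonDescSet (edge1 n k C1) (cnode k i m) ∧ l + 2 ≤ m
            then g ⟨_, hh.1⟩ else 0))) ?_
    intro ω
    show _ = ((fun i' => if hh : (BNode.u i' : BNode n k)
          ∈ nonDescSet (edge1 n k C1) (cnode k i m) then X (BNode.u i') ω else 0),
      (fun v => if hh : v ∈ nonDescSet (edge1 n k C1) (cnode k i m) ∧ otherChain i v
          then X v ω else 0),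
      (fun l => if hh : cnode k i l ∈ nonDescSet (edge1 n k C1) (cnode k i m) ∧ l + 2 ≤ m
          then X (cnode k i l) ω else 0))
    refine Prod.ext ?_ (Prod.ext ?_ ?_)
    · funext i'
      show Ujoint X ω i' = if hh : (BNode.u i' : BNode n k)
          ∈ nonDescSet (edge1 n k C1) (cnode k i m) then X (BNode.u i') ω else 0
      rw [dif_pos (u_nondesc1 hk i' hm1)]
      rfl
    · funext v
      show (if otherChain i v then X v ω else 0)
          = if hh : v ∈ nonDescSet (edge1 n k C1) (cnode k i m) ∧ otherChain i v
            then X v ω else 0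
      by_cases hoc : otherChain i v
      · rw [if_pos hoc, dif_pos ⟨otherChain_nondesc1 hk hoc m, hoc⟩]
      · rw [if_neg hoc, dif_neg (fun hh => hoc hh.2)]
    · funext l
      show (if l + 2 ≤ m then X (cnode k i l) ω else 0)
          = if hh : cnode k i l ∈ nonDescSet (edge1 n k C1) (cnode k i m) ∧ l + 2 ≤ m
            then X (cnode k i l) ω else 0
      by_cases hl : l + 2 ≤ m
      · rw [if_pos hl, dif_pos ⟨pre_nondesc1 hk hl hm2, hl⟩]
      · rw [if_neg hl, dif_neg (fun hh => hl hh.2)]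
  have hmem : cnode k i (m - 1) ∈ parentSet (edge1 n k C1) (cnode k i m) := by
    rw [par1 hk i hm1 hm2]
    rfl
  refine condIndep_cond_equiv hstep1
    (fun val => fun _ => val) (fun g => g ⟨cnode k i (m - 1), hmem⟩) ?_ ?_
  · intro ω
    funext v
    have hv2 : v.1 ∈ ({cnode k i (m - 1)} : Set (BNode n k)) := by
      rw [← par1 (C1 := C1) hk i hm1 hm2]
      exact v.2
    show X v.1 ω = X (cnode k i (m - 1)) ω
    rw [show v.1 = cnode k i (m - 1) from hv2]
  · intro ω
    rfl

lemma local1_y (hk : 1 ≤ k) (X : BNode n k → Ω → ℕ)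
    (h1 : SatisfiesBN μ X (edge1 n k C1)) (i : Fin n) :
    CondIndep μ (X (.y i))
      (fun ω => (Uminus X i ω, Rvar X i ω)) (X (.u i)) := by
  classical
  have hstep1 : CondIndep μ (X (.y i))
      (fun ω => (Uminus X i ω, Rvar X i ω))
      (fun ω => fun v : parentSet (edge1 n k C1) (BNode.y i) => X v.1 ω) := by
    refine condIndep_comp_middle (h1 (BNode.y i))
      (fun g => ((fun i' => if hh : i' ≠ i ∧ (BNode.u i' : BNode n k)
            ∈ nonDescSet (edge1 n k C1) (BNode.y i) then g ⟨_, hh.2⟩ else 0),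
        (fun v => if hh : v ∈ nonDescSet (edge1 n k C1) (BNode.y i) ∧ otherChain i v
            then g ⟨v, hh.1⟩ else 0))) ?_
    intro ω
    show _ = ((fun i' => if hh : i' ≠ i ∧ (BNode.u i' : BNode n k)
          ∈ nonDescSet (edge1 n k C1) (BNode.y i) then X (BNode.u i') ω else 0),
      (fun v => if hh : v ∈ nonDescSet (edge1 n k C1) (BNode.y i) ∧ otherChain i v
          then X v ω else 0))
    refine Prod.ext ?_ ?_
    · funext i'
      show Uminus X i ω i' = if hh : i' ≠ i ∧ (BNode.u i' : BNode n k)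
          ∈ nonDescSet (edge1 n k C1) (BNode.y i) then X (BNode.u i') ω else 0
      rw [Uminus]
      by_cases hi : i' = i
      · simp only [if_pos hi]
        rw [dif_neg (fun hh => hh.1 hi)]
      · simp only [if_neg hi]
        rw [dif_pos ⟨hi, u_nondesc1_y hk hi⟩]
    · funext v
      show (if otherChain i v then X v ω else 0)
          = if hh : v ∈ nonDescSet (edge1 n k C1) (BNode.y i) ∧ otherChain i v
            then X v ω else 0
      by_cases hoc : otherChain i v
      · have hnd := otherChain_nondesc1 (C1 := C1) hk hoc 0
        rw [cnode_zero] at hnd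
        rw [if_pos hoc, dif_pos ⟨hnd, hoc⟩]
      · rw [if_neg hoc, dif_neg (fun hh => hoc hh.2)]
  have hmem : (BNode.u i : BNode n k) ∈ parentSet (edge1 n k C1) (BNode.y i) := by
    rw [par1_y]
    rfl
  refine condIndep_cond_equiv hstep1
    (fun val => fun _ => val) (fun g => g ⟨BNode.u i, hmem⟩) ?_ ?_
  · intro ω
    funext v
    have hv2 : v.1 ∈ ({BNode.u i} : Set (BNode n k)) := by
      rw [← par1_y (C1 := C1)]
      exact v.2
    show X v.1 ω = X (.u i) ω
    rw [show v.1 = BNode.u i from hv2]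
  · intro ω
    rfl

lemma local2_y (X : BNode n k → Ω → ℕ)
    (h2 : SatisfiesBN μ X (edge2 n k C2 A b)) (i : Fin n) :
    CondIndep μ (X (.y i)) (Ujoint X) (X (.z i)) := by
  classical
  have hstep1 : CondIndep μ (X (.y i)) (Ujoint X)
      (fun ω => fun v : parentSet (edge2 n k C2 A b) (BNode.y i) => X v.1 ω) := by
    refine condIndep_comp_middle (h2 (BNode.y i))
      (fun g => fun i' => if hh : (BNode.u i' : BNode n k)
          ∈ nonDescSet (edge2 n k C2 A b) (BNode.y i) then g ⟨_, hh⟩ else 0) ?_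
    intro ω
    funext i'
    show Ujoint X ω i' = if hh : (BNode.u i' : BNode n k)
        ∈ nonDescSet (edge2 n k C2 A b) (BNode.y i) then X (BNode.u i') ω else 0
    rw [dif_pos (u_nondesc2 i')]
    rfl
  have hmem : (BNode.z i : BNode n k) ∈ parentSet (edge2 n k C2 A b) (BNode.y i) := by
    rw [par2_y]
    rfl
  refine condIndep_cond_equiv hstep1
    (fun val => fun _ => val) (fun g => g ⟨BNode.z i, hmem⟩) ?_ ?_
  · intro ω
    funext v
    have hv2 : v.1 ∈ ({BNode.z i} : Set (BNode n k)) := by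
      rw [← par2_y (C2 := C2) (A := A) (b := b)]
      exact v.2
    show X v.1 ω = X (.z i) ω
    rw [show v.1 = BNode.z i from hv2]
  · intro ω
    rfl

end Extract

section Chain

variable {Ω : Type} {μ : PMF Ω} {n k : ℕ} {C1 : Finset (Fin n)}

noncomputable def seg (X : BNode n k → Ω → ℕ) (i : Fin n) (lo hi : ℕ) : Ω → (ℕ → ℕ) :=
  fun ω l => if lo ≤ l ∧ l ≤ hi then X (cnode k i l) ω else 0

lemma chainIH (hk : 1 ≤ k) (X : BNode n k → Ω → ℕ) (h1 : SatisfiesBN μ X (edge1 n k C1))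
    (i : Fin n) : ∀ d m, 1 ≤ m → m ≤ k + 1 → k + 1 - m ≤ d →
    CondIndep μ (seg X i m (k + 1))
      (fun ω => (Ujoint X ω, Rvar X i ω,
        fun l => if l + 2 ≤ m then X (cnode k i l) ω else 0))
      (X (cnode k i (m - 1))) := by
  have hbase : CondIndep μ (seg X i (k + 1) (k + 1))
      (fun ω => (Ujoint X ω, Rvar X i ω,
        fun l => if l + 2 ≤ k + 1 then X (cnode k i l) ω else 0))
      (X (cnode k i (k + 1 - 1))) := by
    refine condIndep_comp_first (local1 hk X h1 i (by omega) (le_refl _))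
      (fun v => fun l => if k + 1 ≤ l ∧ l ≤ k + 1 then v else 0) ?_
    intro ω
    funext l
    show (if k + 1 ≤ l ∧ l ≤ k + 1 then X (cnode k i l) ω else 0)
        = if k + 1 ≤ l ∧ l ≤ k + 1 then X (cnode k i (k + 1)) ω else 0
    by_cases hl : k + 1 ≤ l ∧ l ≤ k + 1
    · rw [if_pos hl, if_pos hl, show l = k + 1 from by omega]
    · rw [if_neg hl, if_neg hl]
  intro d
  induction d with
  | zero =>
    intro m hm1 hm2 hd
    have hm : m = k + 1 := by omega
    subst hm
    exact hbase
  | succ d ih =>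
    intro m hm1 hm2 hd
    by_cases hm : m = k + 1
    · subst hm
      exact hbase
    -- step
    have IH := ih (m + 1) (by omega) (by omega) (by omega)
    rw [Nat.add_sub_cancel] at IH
    have h2 := condIndep_comp_middle IH
      (fun (t : (Fin n → ℕ) × (BNode n k → ℕ) × (ℕ → ℕ)) =>
        ((t.1, t.2.1, fun l => if l + 2 ≤ m then t.2.2 l else 0), t.2.2 (m - 1)))
      (Y' := fun ω => ((Ujoint X ω, Rvar X i ω,
        fun l => if l + 2 ≤ m then X (cnode k i l) ω else 0), X (cnode k i (m - 1)) ω))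
      (by
        intro ω
        refine Prod.ext (Prod.ext rfl (Prod.ext rfl ?_)) ?_
        · funext l
          show (if l + 2 ≤ m then X (cnode k i l) ω else 0)
              = if l + 2 ≤ m then (if l + 2 ≤ m + 1 then X (cnode k i l) ω else 0) else 0
          by_cases hl : l + 2 ≤ m
          · rw [if_pos hl, if_pos hl, if_pos (show l + 2 ≤ m + 1 from by omega)]
          · rw [if_neg hl, if_neg hl]
        · show X (cnode k i (m - 1)) ω
              = if m - 1 + 2 ≤ m + 1 then X (cnode k i (m - 1)) ω else 0
          rw [if_pos (show m - 1 + 2 ≤ m + 1 from by omega)])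
    have wu := condIndep_weak_union h2
    have sw := condIndep_cond_equiv wu
      (fun (p : ℕ × ℕ) => (p.2, p.1)) (fun (p : ℕ × ℕ) => (p.2, p.1))
      (fun ω => rfl) (fun ω => rfl)
    have sym := condIndep_symm sw
    have l1 := condIndep_symm (local1 (C1 := C1) hk X h1 i hm1 hm2)
    have ctr := condIndep_contraction sym l1
    have fin := condIndep_comp_middle ctr
      (fun (p : (ℕ → ℕ) × ℕ) => fun l =>
        if m ≤ l ∧ l ≤ k + 1 then (if l = m then p.2 else p.1 l) else 0)
      (Y' := seg X i m (k + 1))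
      (by
        intro ω
        funext l
        show (if m ≤ l ∧ l ≤ k + 1 then X (cnode k i l) ω else 0)
            = if m ≤ l ∧ l ≤ k + 1 then
                (if l = m then X (cnode k i m) ω
                  else (if m + 1 ≤ l ∧ l ≤ k + 1 then X (cnode k i l) ω else 0)) else 0
        by_cases hl : m ≤ l ∧ l ≤ k + 1
        · rw [if_pos hl, if_pos hl]
          by_cases hlm : l = m
          · rw [if_pos hlm, hlm]
          · rw [if_neg hlm, if_pos (show m + 1 ≤ l ∧ l ≤ k + 1 from by omega)]
        · rw [if_neg hl, if_neg hl])
    exact condIndep_symm fin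

lemma chainJ (hk : 1 ≤ k) (X : BNode n k → Ω → ℕ) (h1 : SatisfiesBN μ X (edge1 n k C1))
    (i : Fin n) : ∀ m, m ≤ k + 1 →
    CondIndep μ (Rvar X i) (seg X i 0 m) (Ujoint X) := by
  intro m
  induction m with
  | zero =>
    intro hm
    have ly := local1_y (C1 := C1) hk X h1 i
    have sw := condIndep_comp_middle ly
      (fun (p : (Fin n → ℕ) × (BNode n k → ℕ)) => (p.2, p.1))
      (Y' := fun ω => (Rvar X i ω, Uminus X i ω)) (fun ω => rfl)
    have wu := condIndep_weak_union sw
    have ce := condIndep_cond_equiv wu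
      (fun (uj : Fin n → ℕ) => (uj i, fun i' => if i' = i then 0 else uj i'))
      (fun (p : ℕ × (Fin n → ℕ)) => fun i' => if i' = i then p.1 else p.2 i')
      (fun ω => rfl)
      (by
        intro ω
        funext i'
        show Ujoint X ω i' = if i' = i then X (BNode.u i) ω else Uminus X i ω i'
        by_cases hi : i' = i
        · rw [if_pos hi, hi]
          rfl
        · rw [if_neg hi]
          show X (BNode.u i') ω = if i' = i then 0 else X (BNode.u i') ω
          rw [if_neg hi])
    have sym := condIndep_symm ce
    refine condIndep_comp_middle sym
      (fun v => fun l => if 0 ≤ l ∧ l ≤ 0 then v else 0) ?_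
    intro ω
    funext l
    show (if 0 ≤ l ∧ l ≤ 0 then X (cnode k i l) ω else 0)
        = if 0 ≤ l ∧ l ≤ 0 then X (BNode.y i) ω else 0
    by_cases hl : 0 ≤ l ∧ l ≤ 0
    · rw [if_pos hl, if_pos hl, show l = 0 from by omega, cnode_zero]
    · rw [if_neg hl, if_neg hl]
  | succ m ihm =>
    intro hm
    have ih := ihm (by omega)
    have l1 := local1 (C1 := C1) hk X h1 i (m := m + 1) (by omega) hm
    rw [Nat.add_sub_cancel] at l1
    have rs := condIndep_comp_middle l1
      (fun (t : (Fin n → ℕ) × (BNode n k → ℕ) × (ℕ → ℕ)) => (t.2.1, (t.1, t.2.2)))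
      (Y' := fun ω => (Rvar X i ω, (Ujoint X ω,
        fun l => if l + 2 ≤ m + 1 then X (cnode k i l) ω else 0))) (fun ω => rfl)
    have wu := condIndep_weak_union rs
    have ce := condIndep_cond_equiv wu
      (Z' := fun ω => (Ujoint X ω, seg X i 0 m ω))
      (fun (q : (Fin n → ℕ) × (ℕ → ℕ)) =>
        (q.2 m, (q.1, fun l => if l + 2 ≤ m + 1 then q.2 l else 0)))
      (fun (p : ℕ × ((Fin n → ℕ) × (ℕ → ℕ))) =>
        (p.2.1, fun l => if 0 ≤ l ∧ l ≤ m then (if l = m then p.1 else p.2.2 l) else 0))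
      (by
        intro ω
        refine Prod.ext ?_ (Prod.ext rfl ?_)
        · show X (cnode k i m) ω = seg X i 0 m ω m
          show X (cnode k i m) ω = if 0 ≤ m ∧ m ≤ m then X (cnode k i m) ω else 0
          rw [if_pos ⟨Nat.zero_le m, le_refl m⟩]
        · funext l
          show (if l + 2 ≤ m + 1 then X (cnode k i l) ω else 0)
              = if l + 2 ≤ m + 1 then (if 0 ≤ l ∧ l ≤ m then X (cnode k i l) ω else 0)
                else 0
          by_cases hl : l + 2 ≤ m + 1
          · rw [if_pos hl, if_pos hl, if_pos (show 0 ≤ l ∧ l ≤ m from by omega)]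
          · rw [if_neg hl, if_neg hl])
      (by
        intro ω
        refine Prod.ext rfl ?_
        funext l
        show (if 0 ≤ l ∧ l ≤ m then X (cnode k i l) ω else 0)
            = if 0 ≤ l ∧ l ≤ m then
                (if l = m then X (cnode k i m) ω
                  else (if l + 2 ≤ m + 1 then X (cnode k i l) ω else 0)) else 0
        by_cases hl : 0 ≤ l ∧ l ≤ m
        · rw [if_pos hl, if_pos hl]
          by_cases hlm : l = m
          · rw [if_pos hlm, hlm]
          · rw [if_neg hlm, if_pos (show l + 2 ≤ m + 1 from by omega)]
        · rw [if_neg hl, if_neg hl])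
    have sym2 := condIndep_symm ce
    have ctr := condIndep_contraction sym2 ih
    refine condIndep_comp_middle ctr
      (fun (p : ℕ × (ℕ → ℕ)) => fun l =>
        if 0 ≤ l ∧ l ≤ m + 1 then (if l = m + 1 then p.1 else p.2 l) else 0)
      (Y' := seg X i 0 (m + 1)) ?_
    intro ω
    funext l
    show (if 0 ≤ l ∧ l ≤ m + 1 then X (cnode k i l) ω else 0)
        = if 0 ≤ l ∧ l ≤ m + 1 then
            (if l = m + 1 then X (cnode k i (m + 1)) ω
              else (if 0 ≤ l ∧ l ≤ m then X (cnode k i l) ω else 0)) else 0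
    by_cases hl : 0 ≤ l ∧ l ≤ m + 1
    · rw [if_pos hl, if_pos hl]
      by_cases hlm : l = m + 1
      · rw [if_pos hlm, hlm]
      · rw [if_neg hlm, if_pos (show 0 ≤ l ∧ l ≤ m from by omega)]
    · rw [if_neg hl, if_neg hl]

end Chain

section PerI

variable {Ω : Type} {μ : PMF Ω} {n k : ℕ} {C1 C2 : Finset (Fin n)}
  {A : Fin k → Finset (Fin n)} {b : Fin k → Fin n}

lemma seg_last (X : BNode n k → Ω → ℕ) (i : Fin n) {lo : ℕ} (hlo : lo ≤ k + 1) (ω : Ω) :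
    X (BNode.z i) ω = seg X i lo (k + 1) ω (k + 1) := by
  show X (BNode.z i) ω = if lo ≤ k + 1 ∧ k + 1 ≤ k + 1 then X (cnode k i (k + 1)) ω else 0
  rw [if_pos ⟨hlo, le_refl _⟩, cnode_last i (by omega)]

lemma seg_x (X : BNode n k → Ω → ℕ) (i : Fin n) {lo : ℕ} (j : Fin k)
    (hlo : lo ≤ (j : ℕ) + 1) (ω : Ω) :
    X (BNode.x i j) ω = seg X i lo (k + 1) ω ((j : ℕ) + 1) := by
  show X (BNode.x i j) ω
      = if lo ≤ (j : ℕ) + 1 ∧ (j : ℕ) + 1 ≤ k + 1 then X (cnode k i ((j : ℕ) + 1)) ω else 0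
  rw [if_pos ⟨hlo, by omega⟩, cnode_mid i (by omega) (by omega)]
  have hj : (⟨(j : ℕ) + 1 - 1, by omega⟩ : Fin k) = j := Fin.ext (by simp)
  rw [hj]

lemma seg_y (X : BNode n k → Ω → ℕ) (i : Fin n) {hi : ℕ} (ω : Ω) :
    X (BNode.y i) ω = seg X i 0 hi ω 0 := by
  show X (BNode.y i) ω = if 0 ≤ 0 ∧ 0 ≤ hi then X (cnode k i 0) ω else 0
  rw [if_pos ⟨le_refl _, Nat.zero_le _⟩, cnode_zero]

lemma tuple_rest (hk : 1 ≤ k) (X : BNode n k → Ω → ℕ)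
    (h1 : SatisfiesBN μ X (edge1 n k C1)) (i : Fin n) :
    CondIndep μ (tupleVar X i) (Rvar X i) (Ujoint X) := by
  have hJ := chainJ (C1 := C1) hk X h1 i (k + 1) (le_refl _)
  have hm := condIndep_comp_middle hJ
    (fun s => ((fun j : Fin k => s ((j : ℕ) + 1)), s 0, s (k + 1)))
    (Y' := tupleVar X i)
    (by
      intro ω
      refine Prod.ext ?_ (Prod.ext ?_ ?_)
      · funext j
        exact seg_x X i j (by omega) ω
      · exact seg_y X i (hi := k + 1) ω
      · exact seg_last X i (by omega) ω)
  exact condIndep_symm hm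

lemma per_i (hk : 1 ≤ k) (X : BNode n k → Ω → ℕ)
    (h1 : SatisfiesBN μ X (edge1 n k C1)) (h2 : SatisfiesBN μ X (edge2 n k C2 A b))
    {β : Fin n → Type} (T : ∀ i, Ω → β i)
    (hT : ∀ i, MinSuffStat μ (tupleVar X i) (Ujoint X) (T i)) (i : Fin n) :
    FunDep μ (X (.y i)) (T i) ∧ FunDep μ (X (.z i)) (T i) ∧
      (∀ j : Fin k, FunDep μ (X (.x i j)) (T i)) := by
  have hA1 := chainIH (C1 := C1) hk X h1 i (k + 1) 1 (le_refl _) (by omega) (by omega)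
  rw [show (1 : ℕ) - 1 = 0 from rfl, cnode_zero] at hA1
  -- U ⊥ Z | Y
  have mA := condIndep_comp_middle hA1 (fun t => t.1) (Y' := Ujoint X) (fun ω => rfl)
  have hUZY : CondIndep μ (Ujoint X) (X (.z i)) (X (.y i)) := by
    refine condIndep_comp_middle (condIndep_symm mA) (fun s => s (k + 1))
      (Y' := X (.z i)) ?_
    intro ω
    exact seg_last X i (by omega) ω
  -- U ⊥ Y | Z
  have hUYZ : CondIndep μ (Ujoint X) (X (.y i)) (X (.z i)) :=
    condIndep_symm (local2_y X h2 i)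
  obtain ⟨f, g, hfg, hCI⟩ := double_markov hUZY hUYZ
  -- U ⊥ Xs | (Y, Z)
  have mC := condIndep_comp_first hA1
    (fun s => ((fun j : Fin k => s ((j : ℕ) + 1)), s (k + 1)))
    (X' := fun ω => ((fun j : Fin k => X (.x i j) ω), X (.z i) ω))
    (by
      intro ω
      refine Prod.ext ?_ ?_
      · funext j
        exact seg_x X i j (by omega) ω
      · exact seg_last X i (by omega) ω)
  have mD := condIndep_comp_middle mC (fun t => t.1) (Y' := Ujoint X) (fun ω => rfl)
  have wu := condIndep_weak_union (condIndep_symm mD)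
  have aug := condIndep_cond_aug wu (fun p => f p.1) (fun ω _ => rfl)
  have ce2 := condIndep_cond_equiv aug
    (Z' := fun ω => (f (X (.y i) ω), (X (.y i) ω, X (.z i) ω)))
    (fun q => (q.2, q.1)) (fun p => (p.2, p.1)) (fun ω => rfl) (fun ω => rfl)
  have ctr := condIndep_contraction ce2 (condIndep_symm hCI)
  have tup := condIndep_comp_middle ctr (fun p => (p.1, p.2.1, p.2.2))
    (Y' := tupleVar X i) (fun ω => rfl)
  have hSuffW : SuffStat μ (tupleVar X i) (Ujoint X) (fun ω => f (X (.y i) ω)) :=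
    ⟨⟨fun t => f t.2.1, fun ω _ => rfl⟩, tup⟩
  have hWT := (hT i).2 _ _ hSuffW
  refine ⟨funDep_trans ⟨f, fun ω _ => rfl⟩ hWT,
    funDep_trans ⟨g, fun ω hω => hfg ω hω⟩ hWT, ?_⟩
  intro j
  -- Y ⊥ Z | X^j
  have mh := chainIH (C1 := C1) hk X h1 i (k + 1) ((j : ℕ) + 2) (by omega) (by omega)
    (by omega)
  have hcn : cnode k i ((j : ℕ) + 2 - 1) = BNode.x i j := by
    rw [show (j : ℕ) + 2 - 1 = (j : ℕ) + 1 from by omega,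
      cnode_mid i (by omega) (by omega)]
    exact congrArg (BNode.x i) (Fin.ext (by simp))
  rw [hcn] at mh
  have first := condIndep_comp_first mh (fun s => s (k + 1)) (X' := X (.z i))
    (fun ω => seg_last X i (by omega) ω)
  have mid := condIndep_comp_middle first (fun t => t.2.2 0) (Y' := X (.y i))
    (by
      intro ω
      show X (BNode.y i) ω = if 0 + 2 ≤ (j : ℕ) + 2 then X (cnode k i 0) ω else 0
      rw [if_pos (by omega), cnode_zero])
  have hYZX : CondIndep μ (X (.y i)) (X (.z i)) (X (.x i j)) := condIndep_symm mid
  have hFXW : FunDep μ (X (.x i j)) (fun ω => f (X (.y i) ω)) :=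
    common_funDep (fun ω _ => rfl) (fun ω hω => hfg ω hω) hYZX
  exact funDep_trans hFXW hWT

end PerI

section Master

variable {Ω : Type} {μ : PMF Ω} {n k : ℕ} {C1 C2 : Finset (Fin n)}
  {A : Fin k → Finset (Fin n)} {b : Fin k → Fin n}

lemma master (hk : 1 ≤ k) (X : BNode n k → Ω → ℕ)
    (h1 : SatisfiesBN μ X (edge1 n k C1)) (h2 : SatisfiesBN μ X (edge2 n k C2 A b))
    {β : Fin n → Type} (T : ∀ i, Ω → β i)
    (hT : ∀ i, MinSuffStat μ (tupleVar X i) (Ujoint X) (T i)) (S : Finset (Fin n)) :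
    CondIndep μ (Ujoint X) (fun ω => fun i : {i // i ∈ S} => tupleVar X i.1 ω)
      (jointFin T S) ∧
    FunDep μ (fun ω => fun i : {i // i ∈ S} => tupleVar X i.1 ω) (jointFin T S) := by
  classical
  induction S using Finset.induction with
  | empty =>
    constructor
    · intro u m c
      have e1 : pr μ {ω | Ujoint X ω = u
            ∧ (fun i : {i // i ∈ (∅ : Finset (Fin n))} => tupleVar X i.1 ω) = m
            ∧ jointFin T (∅ : Finset (Fin n)) ω = c}
          = pr μ {ω | Ujoint X ω = u} := pr_congr' fun ω => by
        simp only [Set.mem_setOf_eq]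
        exact ⟨fun h => h.1, fun h => ⟨h,
          funext fun i => absurd i.2 (Finset.notMem_empty i.1),
          funext fun i => absurd i.2 (Finset.notMem_empty i.1)⟩⟩
      have e2 : pr μ {ω | jointFin T (∅ : Finset (Fin n)) ω = c}
          = pr μ (Set.univ : Set Ω) := pr_congr' fun ω => by
        simp only [Set.mem_setOf_eq, Set.mem_univ, iff_true]
        exact funext fun i => absurd i.2 (Finset.notMem_empty i.1)
      have e3 : pr μ {ω | Ujoint X ω = u ∧ jointFin T (∅ : Finset (Fin n)) ω = c}
          = pr μ {ω | Ujoint X ω = u} := pr_congr' fun ω => by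
        simp only [Set.mem_setOf_eq]
        exact ⟨fun h => h.1, fun h => ⟨h,
          funext fun i => absurd i.2 (Finset.notMem_empty i.1)⟩⟩
      have e4 : pr μ {ω | (fun i : {i // i ∈ (∅ : Finset (Fin n))} => tupleVar X i.1 ω) = m
            ∧ jointFin T (∅ : Finset (Fin n)) ω = c}
          = pr μ (Set.univ : Set Ω) := pr_congr' fun ω => by
        simp only [Set.mem_setOf_eq, Set.mem_univ, iff_true]
        exact ⟨funext fun i => absurd i.2 (Finset.notMem_empty i.1),
          funext fun i => absurd i.2 (Finset.notMem_empty i.1)⟩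
      rw [e1, e2, e3, e4, pr_univ, mul_one]
    · exact ⟨fun p => fun i => absurd i.2 (Finset.notMem_empty i.1),
        fun ω hω => funext fun i => absurd i.2 (Finset.notMem_empty i.1)⟩
  | @insert a S ha ih =>
    obtain ⟨ihCI, ihFD⟩ := ih
    obtain ⟨fa, hfa⟩ := (hT a).1.1
    obtain ⟨fS, hfS⟩ := ihFD
    have hE := tuple_rest (C1 := C1) hk X h1 a
    have hAB := condIndep_comp_middle hE
      (fun r => fun i : {i // i ∈ S} =>
        ((fun j => r (BNode.x i.1 j)), r (BNode.y i.1), r (BNode.z i.1)))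
      (Y' := fun ω => fun i : {i // i ∈ S} => tupleVar X i.1 ω)
      (by
        intro ω
        funext i
        show tupleVar X i.1 ω = ((fun j => Rvar X a ω (BNode.x i.1 j)),
          Rvar X a ω (BNode.y i.1), Rvar X a ω (BNode.z i.1))
        refine Prod.ext ?_ (Prod.ext ?_ ?_)
        · funext j
          show X (BNode.x i.1 j) ω
              = if otherChain a (BNode.x i.1 j) then X (BNode.x i.1 j) ω else 0
          rw [if_pos (show otherChain a (BNode.x i.1 j) from fun hia => ha (hia ▸ i.2))]
        · show X (BNode.y i.1) ω
              = if otherChain a (BNode.y i.1) then X (BNode.y i.1) ω else 0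
          rw [if_pos (show otherChain a (BNode.y i.1) from fun hia => ha (hia ▸ i.2))]
        · show X (BNode.z i.1) ω
              = if otherChain a (BNode.z i.1) then X (BNode.z i.1) ω else 0
          rw [if_pos (show otherChain a (BNode.z i.1) from fun hia => ha (hia ▸ i.2))])
    have hPM := pair_merge (μ := μ) (U' := Ujoint X) (A := tupleVar X a)
      (B := fun ω => fun i : {i // i ∈ S} => tupleVar X i.1 ω)
      (TA := T a) (TB := jointFin T S) (fA := fa) (fB := fS)
      (fun ω h0 => hfa ω ((PMF.mem_support_iff μ ω).mpr h0))
      (fun ω h0 => hfS ω ((PMF.mem_support_iff μ ω).mpr h0))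
      hAB (hT a).1.2 ihCI
    have hmemA : a ∈ insert a S := Finset.mem_insert_self a S
    have hMid := condIndep_comp_middle hPM
      (fun q => fun i : {i // i ∈ insert a S} => if h : i.1 ∈ S then q.2 ⟨i.1, h⟩ else q.1)
      (Y' := fun ω => fun i : {i // i ∈ insert a S} => tupleVar X i.1 ω)
      (by
        intro ω
        funext i
        show tupleVar X i.1 ω = if h : i.1 ∈ S
            then tupleVar X i.1 ω else tupleVar X a ω
        by_cases h : i.1 ∈ S
        · rw [dif_pos h]
        · rw [dif_neg h, (Finset.mem_insert.mp i.2).resolve_right h])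
    have hCond := condIndep_cond_equiv hMid
      (Z' := jointFin T (insert a S))
      (fun s => (s ⟨a, hmemA⟩,
        fun i : {i // i ∈ S} => s ⟨i.1, Finset.mem_insert_of_mem i.2⟩))
      (fun q => fun i : {i // i ∈ insert a S} =>
        if h : i.1 ∈ S then q.2 ⟨i.1, h⟩
        else cast (congrArg β ((Finset.mem_insert.mp i.2).resolve_right h).symm) q.1)
      (fun ω => rfl)
      (by
        intro ω
        funext i
        obtain ⟨iv, hiv⟩ := i
        show T iv ω = if h : iv ∈ S then T iv ω
            else cast (congrArg β ((Finset.mem_insert.mp hiv).resolve_right h).symm) (T a ω)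
        by_cases h : iv ∈ S
        · rw [dif_pos h]
        · rw [dif_neg h]
          have hia : iv = a := (Finset.mem_insert.mp hiv).resolve_right h
          subst hia
          exact (cast_eq _ _).symm)
    refine ⟨hCond, ?_⟩
    refine ⟨fun p => fun i : {i // i ∈ insert a S} =>
      if h : i.1 ∈ S then fS (fun i' : {i' // i' ∈ S} =>
          p ⟨i'.1, Finset.mem_insert_of_mem i'.2⟩) ⟨i.1, h⟩
      else cast (congrArg β ((Finset.mem_insert.mp i.2).resolve_right h).symm)
        (fa (p ⟨a, hmemA⟩)), ?_⟩
    intro ω hω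
    funext i
    obtain ⟨iv, hiv⟩ := i
    show T iv ω = if h : iv ∈ S
        then fS (fun i' : {i' // i' ∈ S} => tupleVar X i'.1 ω) ⟨iv, h⟩
        else cast (congrArg β ((Finset.mem_insert.mp hiv).resolve_right h).symm)
          (fa (tupleVar X a ω))
    by_cases h : iv ∈ S
    · rw [dif_pos h]
      exact congrFun (hfS ω hω) ⟨iv, h⟩
    · rw [dif_neg h]
      have hia : iv = a := (Finset.mem_insert.mp hiv).resolve_right h
      subst hia
      rw [← hfa ω hω]
      exact (cast_eq _ _).symm

end Master



/-- Lemma 8 of the paper: for any `S ⊆ {1,…,n}` and `j`, Networks 1 and 2 imply that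
`T_S = (T_i)_{i ∈ S}` is a sufficient statistic of `X_S^j` (and of `Y_S`, and of `Z_S`)
for `U`, where `T_i = S((X_i^1,…,X_i^k,Y_i,Z_i); U)`. -/
theorem networks_joint_suffStat (n k : ℕ) (hn : 2 ≤ n) (hk : 1 ≤ k)
    (C1 C2 : Finset (Fin n)) (hC : Disjoint C1 C2)
    (A : Fin k → Finset (Fin n)) (b : Fin k → Fin n) (hb : ∀ j, b j ∉ A j)
    (Ω : Type) (μ : PMF Ω) (X : BNode n k → Ω → ℕ)
    (hfin : ∀ v, FinSupp μ (X v))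
    (h1 : SatisfiesBN μ X (edge1 n k C1))
    (h2 : SatisfiesBN μ X (edge2 n k C2 A b))
    (β : Fin n → Type) (T : ∀ i, Ω → β i)
    (hT : ∀ i, MinSuffStat μ (tupleVar X i) (Ujoint X) (T i)) :
    ∀ (S : Finset (Fin n)) (j : Fin k),
      SuffStat μ (fun ω => fun i : {i // i ∈ S} => X (.x i.1 j) ω) (Ujoint X)
        (jointFin T S) ∧
      SuffStat μ (fun ω => fun i : {i // i ∈ S} => X (.y i.1) ω) (Ujoint X)
        (jointFin T S) ∧
      SuffStat μ (fun ω => fun i : {i // i ∈ S} => X (.z i.1) ω) (Ujoint X)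
        (jointFin T S) := by
  intro S j
  obtain ⟨hCI, hFD⟩ := master hk X h1 h2 T hT S
  have hper := fun i => per_i hk X h1 h2 T hT i
  refine ⟨⟨?_, ?_⟩, ⟨?_, ?_⟩, ⟨?_, ?_⟩⟩
  · -- FunDep X_S^j T_S
    choose fx hfx using fun i : Fin n => (hper i).2.2 j
    exact ⟨fun p => fun i : {i // i ∈ S} => fx i.1 (p i),
      fun ω hω => funext fun i => hfx i.1 ω hω⟩
  · exact condIndep_comp_middle hCI (fun s => fun i => (s i).1 j)
      (Y' := fun ω => fun i : {i // i ∈ S} => X (.x i.1 j) ω) (fun ω => rfl)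
  · choose fy hfy using fun i : Fin n => (hper i).1
    exact ⟨fun p => fun i : {i // i ∈ S} => fy i.1 (p i),
      fun ω hω => funext fun i => hfy i.1 ω hω⟩
  · exact condIndep_comp_middle hCI (fun s => fun i => (s i).2.1)
      (Y' := fun ω => fun i : {i // i ∈ S} => X (.y i.1) ω) (fun ω => rfl)
  · choose fz hfz using fun i : Fin n => (hper i).2.1
    exact ⟨fun p => fun i : {i // i ∈ S} => fz i.1 (p i),
      fun ω hω => funext fun i => hfz i.1 ω hω⟩
  · exact condIndep_comp_middle hCI (fun s => fun i => (s i).2.2)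
      (Y' := fun ω => fun i : {i // i ∈ S} => X (.z i.1) ω) (fun ω => rfl)


end Paper
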